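/- arXiv:1412.2231 — 6 statements merged into one kernel-verified Lean document; each statement's English description precedes it below -/
import Mathlib

section
/- Let g : ℝ → ℝ be bounded below. For x₁ > x₂ and any p₁ minimizing p ↦ g(p) + (1/2)(p - x₁)², and any p₂ minimizing p ↦ g(p) + (1/2)(p - x₂)², one has p₁ ≥ p₂. -/
/-- Monotonicity of the proximal operator of any lower bounded function. -/
theorem prox_monotone (g : ℝ → ℝ) (hg : BddBelow (Set.range g))
    (x₁ x₂ p₁ p₂ : ℝ) (hx : x₁ > x₂)
    (hp₁ : ∀ p : ℝ, g p₁ + (1/2) * (p₁ - x₁)^2 ≤ g p + (1/2) * (p - x₁)^2)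
    (hp₂ : ∀ p : ℝ, g p₂ + (1/2) * (p₂ - x₂)^2 ≤ g p + (1/2) * (p - x₂)^2) :
    p₁ ≥ p₂ := by
  have h1 := hp₁ p₂
  have h2 := hp₂ p₁
  nlinarith [sq_nonneg (p₁ - p₂)]
end

section
/- For any real m × n matrices A and B (with m ≤ n), ‖A - B‖_F² ≥ ∑_{i=1}^m (σᵢ(A) - σᵢ(B))², where σᵢ denotes the i-th largest singular value. -/
open Finset

lemma tele' (a : ℕ → ℝ) (m i : ℕ) (him : i ≤ m) (ham : a m = 0) :
    a i = ∑ k ∈ range m, if i ≤ k then a k - a (k+1) else 0 := by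
  have h1 : a i = ∑ k ∈ Ico i m, (a k - a (k+1)) := by
    rw [Finset.sum_Ico_eq_sub _ him, Finset.sum_range_sub' a, Finset.sum_range_sub' a, ham]
    ring
  rw [h1, ← Finset.sum_filter]
  congr 1
  ext k
  simp only [Finset.mem_Ico, Finset.mem_filter, Finset.mem_range]
  omega

lemma sum4_comm (s t u v : Finset ℕ) (f : ℕ → ℕ → ℕ → ℕ → ℝ) :
    ∑ i ∈ s, ∑ j ∈ t, ∑ k ∈ u, ∑ l ∈ v, f i j k l
      = ∑ k ∈ u, ∑ l ∈ v, ∑ i ∈ s, ∑ j ∈ t, f i j k l :=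
  calc ∑ i ∈ s, ∑ j ∈ t, ∑ k ∈ u, ∑ l ∈ v, f i j k l
      = ∑ i ∈ s, ∑ k ∈ u, ∑ j ∈ t, ∑ l ∈ v, f i j k l :=
        Finset.sum_congr rfl fun i _ => Finset.sum_comm
    _ = ∑ k ∈ u, ∑ i ∈ s, ∑ j ∈ t, ∑ l ∈ v, f i j k l := Finset.sum_comm
    _ = ∑ k ∈ u, ∑ i ∈ s, ∑ l ∈ v, ∑ j ∈ t, f i j k l :=
        Finset.sum_congr rfl fun k _ => Finset.sum_congr rfl fun i _ => Finset.sum_comm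
    _ = ∑ k ∈ u, ∑ l ∈ v, ∑ i ∈ s, ∑ j ∈ t, f i j k l :=
        Finset.sum_congr rfl fun k _ => Finset.sum_comm

lemma filter_le_range {m k : ℕ} (hk : k < m) :
    (range m).filter (fun i => i ≤ k) = range (k+1) := by
  ext i
  simp only [Finset.mem_filter, Finset.mem_range]
  omega

lemma substoch_rearrange (m : ℕ) (a b : ℕ → ℝ) (D : ℕ → ℕ → ℝ)
    (ha0 : ∀ k, 0 ≤ a k) (hb0 : ∀ k, 0 ≤ b k)
    (haa : ∀ k, a (k+1) ≤ a k) (hbb : ∀ k, b (k+1) ≤ b k)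
    (ham : a m = 0) (hbm : b m = 0)
    (hD0 : ∀ i j, 0 ≤ D i j)
    (hrow : ∀ i, i < m → ∑ j ∈ range m, D i j ≤ 1)
    (hcol : ∀ j, j < m → ∑ i ∈ range m, D i j ≤ 1) :
    ∑ i ∈ range m, ∑ j ∈ range m, D i j * a i * b j ≤ ∑ i ∈ range m, a i * b i := by
  set δ : ℕ → ℝ := fun k => a k - a (k+1) with hδ
  set ε : ℕ → ℝ := fun k => b k - b (k+1) with hε
  have hδ0 : ∀ k, 0 ≤ δ k := fun k => sub_nonneg.mpr (haa k)
  have hε0 : ∀ k, 0 ≤ ε k := fun k => sub_nonneg.mpr (hbb k)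
  set S : ℕ → ℕ → ℝ := fun k l =>
    ∑ i ∈ range m, ∑ j ∈ range m, if i ≤ k ∧ j ≤ l then D i j else 0 with hS
  set N : ℕ → ℕ → ℝ := fun k l =>
    ∑ i ∈ range m, ∑ j ∈ range m, if i ≤ k ∧ j ≤ l then (if i = j then (1:ℝ) else 0) else 0
    with hN
  -- LHS rewritten
  have hL : ∑ i ∈ range m, ∑ j ∈ range m, D i j * a i * b j
      = ∑ k ∈ range m, ∑ l ∈ range m, δ k * ε l * S k l := by
    have step : ∀ i ∈ range m, ∀ j ∈ range m, D i j * a i * b j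
        = ∑ k ∈ range m, ∑ l ∈ range m,
            δ k * ε l * (if i ≤ k ∧ j ≤ l then D i j else 0) := by
      intro i hi j hj
      rw [tele' a m i (mem_range.mp hi).le ham, tele' b m j (mem_range.mp hj).le hbm,
        mul_assoc, Finset.sum_mul_sum, Finset.mul_sum]
      refine Finset.sum_congr rfl fun k _ => ?_
      rw [Finset.mul_sum]
      refine Finset.sum_congr rfl fun l _ => ?_
      by_cases h1 : i ≤ k <;> by_cases h2 : j ≤ l <;> simp [h1, h2, hδ, hε] <;> ring
    calc ∑ i ∈ range m, ∑ j ∈ range m, D i j * a i * b j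
        = ∑ i ∈ range m, ∑ j ∈ range m, ∑ k ∈ range m, ∑ l ∈ range m,
            δ k * ε l * (if i ≤ k ∧ j ≤ l then D i j else 0) :=
          Finset.sum_congr rfl fun i hi => Finset.sum_congr rfl (step i hi)
      _ = ∑ k ∈ range m, ∑ l ∈ range m, ∑ i ∈ range m, ∑ j ∈ range m,
            δ k * ε l * (if i ≤ k ∧ j ≤ l then D i j else 0) := sum4_comm _ _ _ _ _
      _ = ∑ k ∈ range m, ∑ l ∈ range m, δ k * ε l * S k l := by
          refine Finset.sum_congr rfl fun k _ => Finset.sum_congr rfl fun l _ => ?_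
          rw [hS]
          simp only [Finset.mul_sum]
  -- RHS rewritten
  have hR : ∑ i ∈ range m, a i * b i
      = ∑ k ∈ range m, ∑ l ∈ range m, δ k * ε l * N k l := by
    have step : ∀ i ∈ range m, ∀ j ∈ range m, (if i = j then (1:ℝ) else 0) * a i * b j
        = ∑ k ∈ range m, ∑ l ∈ range m,
            δ k * ε l * (if i ≤ k ∧ j ≤ l then (if i = j then (1:ℝ) else 0) else 0) := by
      intro i hi j hj
      rw [tele' a m i (mem_range.mp hi).le ham, tele' b m j (mem_range.mp hj).le hbm,
        mul_assoc, Finset.sum_mul_sum, Finset.mul_sum]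
      refine Finset.sum_congr rfl fun k _ => ?_
      rw [Finset.mul_sum]
      refine Finset.sum_congr rfl fun l _ => ?_
      by_cases h1 : i ≤ k <;> by_cases h2 : j ≤ l <;> simp [h1, h2, hδ, hε] <;> ring
    have base : ∑ i ∈ range m, a i * b i
        = ∑ i ∈ range m, ∑ j ∈ range m, (if i = j then (1:ℝ) else 0) * a i * b j := by
      refine Finset.sum_congr rfl fun i hi => ?_
      rw [Finset.sum_eq_single i]
      · simp
      · intro j _ hji; simp [Ne.symm hji]
      · intro h; exact absurd hi h
    calc ∑ i ∈ range m, a i * b i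
        = ∑ i ∈ range m, ∑ j ∈ range m, (if i = j then (1:ℝ) else 0) * a i * b j := base
      _ = ∑ i ∈ range m, ∑ j ∈ range m, ∑ k ∈ range m, ∑ l ∈ range m,
            δ k * ε l * (if i ≤ k ∧ j ≤ l then (if i = j then (1:ℝ) else 0) else 0) :=
          Finset.sum_congr rfl fun i hi => Finset.sum_congr rfl (step i hi)
      _ = ∑ k ∈ range m, ∑ l ∈ range m, ∑ i ∈ range m, ∑ j ∈ range m,
            δ k * ε l * (if i ≤ k ∧ j ≤ l then (if i = j then (1:ℝ) else 0) else 0) :=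
          sum4_comm _ _ _ _ _
      _ = ∑ k ∈ range m, ∑ l ∈ range m, δ k * ε l * N k l := by
          refine Finset.sum_congr rfl fun k _ => Finset.sum_congr rfl fun l _ => ?_
          rw [hN]
          simp only [Finset.mul_sum]
  rw [hL, hR]
  refine Finset.sum_le_sum fun k hk => Finset.sum_le_sum fun l hl => ?_
  refine mul_le_mul_of_nonneg_left ?_ (mul_nonneg (hδ0 k) (hε0 l))
  -- S k l ≤ N k l
  have hkm := mem_range.mp hk
  have hlm := mem_range.mp hl
  -- N k l = min k l + 1
  have hNval : N k l = (min k l + 1 : ℕ) := by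
    rw [hN]
    simp only
    have : ∀ i ∈ range m, (∑ j ∈ range m,
        if i ≤ k ∧ j ≤ l then (if i = j then (1:ℝ) else 0) else 0)
        = if i ≤ k ∧ i ≤ l then 1 else 0 := by
      intro i hi
      rw [Finset.sum_eq_single i]
      · by_cases h1 : i ≤ k <;> by_cases h2 : i ≤ l <;> simp [h1, h2]
      · intro j _ hji; simp [Ne.symm hji]
      · intro h; exact absurd hi h
    rw [Finset.sum_congr rfl this, ← Finset.sum_filter]
    have : (range m).filter (fun i => i ≤ k ∧ i ≤ l) = range (min k l + 1) := by
      ext i; simp only [Finset.mem_filter, Finset.mem_range]; omega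
    rw [this]
    simp
  -- S k l ≤ k + 1 and ≤ l + 1
  have hSk : S k l ≤ (k + 1 : ℕ) := by
    rw [hS]
    simp only
    have h1 : ∀ i ∈ range m, (∑ j ∈ range m, if i ≤ k ∧ j ≤ l then D i j else 0)
        ≤ (if i ≤ k then (1:ℝ) else 0) := by
      intro i hi
      by_cases h : i ≤ k
      · simp only [h, if_true, true_and]
        calc ∑ j ∈ range m, (if j ≤ l then D i j else 0)
            ≤ ∑ j ∈ range m, D i j := by
              refine Finset.sum_le_sum fun j _ => ?_
              by_cases hj : j ≤ l <;> simp [hj, hD0]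
          _ ≤ 1 := hrow i (mem_range.mp hi)
      · simp only [h, if_false, false_and]
        simp
    calc S k l ≤ ∑ i ∈ range m, (if i ≤ k then (1:ℝ) else 0) := Finset.sum_le_sum h1
      _ = (k+1 : ℕ) := by
          rw [← Finset.sum_filter, filter_le_range hkm]; simp
  have hSl : S k l ≤ (l + 1 : ℕ) := by
    rw [hS]
    simp only
    rw [Finset.sum_comm]
    have h1 : ∀ j ∈ range m, (∑ i ∈ range m, if i ≤ k ∧ j ≤ l then D i j else 0)
        ≤ (if j ≤ l then (1:ℝ) else 0) := by
      intro j hj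
      by_cases h : j ≤ l
      · simp only [h, if_true, and_true]
        calc ∑ i ∈ range m, (if i ≤ k then D i j else 0)
            ≤ ∑ i ∈ range m, D i j := by
              refine Finset.sum_le_sum fun i _ => ?_
              by_cases hi : i ≤ k <;> simp [hi, hD0]
          _ ≤ 1 := hcol j (mem_range.mp hj)
      · simp only [h, if_false, and_false]
        simp
    calc ∑ j ∈ range m, ∑ i ∈ range m, (if i ≤ k ∧ j ≤ l then D i j else 0)
        ≤ ∑ j ∈ range m, (if j ≤ l then (1:ℝ) else 0) := Finset.sum_le_sum h1
      _ = (l+1 : ℕ) := by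
          rw [← Finset.sum_filter, filter_le_range hlm]; simp
  rw [hNval]
  rcases le_total k l with h | h
  · have : min k l = k := min_eq_left h
    rw [this]; exact hSk
  · have : min k l = l := min_eq_right h
    rw [this]; exact hSl

open Finset

/-- Bessel-type inequality for a pairwise-orthogonal family with norms ≤ 1,
in raw sum form. -/
lemma bessel_raw {ι κ : Type*} [Fintype ι] [Fintype κ] (e : ι → κ → ℝ)
    (horth : ∀ i i', i ≠ i' → ∑ t, e i t * e i' t = 0)
    (hnorm : ∀ i, ∑ t, e i t * e i t ≤ 1) (x : κ → ℝ) :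
    ∑ i, (∑ t, e i t * x t)^2 ≤ ∑ t, x t * x t := by
  classical
  set c : ι → ℝ := fun i => ∑ t, e i t * x t with hc
  have key : 0 ≤ ∑ t, (x t - ∑ i, c i * e i t)^2 :=
    Finset.sum_nonneg fun t _ => sq_nonneg _
  have expand : ∑ t, (x t - ∑ i, c i * e i t)^2
      = ∑ t, x t * x t - 2 * ∑ i, c i ^ 2
        + ∑ i, ∑ i', c i * c i' * (∑ t, e i t * e i' t) := by
    have h1 : ∀ t : κ, (x t - ∑ i, c i * e i t)^2
        = x t * x t - 2 * (∑ i, c i * e i t * x t)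
          + ∑ i, ∑ i', (c i * e i t) * (c i' * e i' t) := by
      intro t
      have h2 : (x t - ∑ i, c i * e i t)^2
          = x t * x t - 2 * ((∑ i, c i * e i t) * x t)
            + (∑ i, c i * e i t) * (∑ i', c i' * e i' t) := by ring
      rw [h2, Finset.sum_mul_sum, Finset.sum_mul]
    rw [Finset.sum_congr rfl fun t _ => h1 t]
    rw [Finset.sum_add_distrib, Finset.sum_sub_distrib]
    congr 1
    · congr 1
      rw [← Finset.mul_sum, Finset.sum_comm]
      congr 1
      refine Finset.sum_congr rfl fun i _ => ?_
      rw [hc]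
      simp only [sq, Finset.sum_mul, Finset.mul_sum]
      refine Finset.sum_congr rfl fun t _ => ?_
      refine Finset.sum_congr rfl fun s _ => ?_
      ring
    · rw [Finset.sum_comm (γ := κ)]
      refine Finset.sum_congr rfl fun i _ => ?_
      rw [Finset.sum_comm]
      refine Finset.sum_congr rfl fun i' _ => ?_
      rw [Finset.mul_sum]
      refine Finset.sum_congr rfl fun t _ => ?_
      ring
  have diag : ∑ i, ∑ i', c i * c i' * (∑ t, e i t * e i' t) ≤ ∑ i, c i ^ 2 := by
    have h1 : ∀ i, ∑ i', c i * c i' * (∑ t, e i t * e i' t)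
        = c i ^ 2 * (∑ t, e i t * e i t) := by
      intro i
      rw [Finset.sum_eq_single i]
      · ring
      · intro i' _ hii'
        rw [horth i i' (Ne.symm hii')]
        ring
      · intro h; exact absurd (Finset.mem_univ i) h
    rw [Finset.sum_congr rfl fun i _ => h1 i]
    refine Finset.sum_le_sum fun i _ => ?_
    calc c i ^ 2 * (∑ t, e i t * e i t) ≤ c i ^ 2 * 1 :=
          mul_le_mul_of_nonneg_left (hnorm i) (sq_nonneg _)
      _ = c i ^ 2 := mul_one _
  rw [expand] at key
  nlinarith [key, diag]

open Finset Matrix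

/-- The singular values of a real matrix (unsorted): square roots of the
eigenvalues of `A * Aᵀ`. -/
noncomputable def svUnsorted {m n : ℕ} (A : Matrix (Fin m) (Fin n) ℝ) : Fin m → ℝ :=
  fun i => Real.sqrt ((Matrix.isHermitian_mul_conjTranspose_self A).eigenvalues i)

namespace SVDAux

variable {m n : ℕ} (A : Matrix (Fin m) (Fin n) ℝ)

noncomputable def u : Fin m → Fin m → ℝ :=
  fun i => ⇑((Matrix.isHermitian_mul_conjTranspose_self A).eigenvectorBasis i)

noncomputable def w : Fin m → Fin n → ℝ :=
  fun i t => ∑ r, A r t * u A i r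

noncomputable def v : Fin m → Fin n → ℝ :=
  fun i t => (svUnsorted A i)⁻¹ * w A i t

lemma sv_nonneg (i : Fin m) : 0 ≤ svUnsorted A i := Real.sqrt_nonneg _

lemma sv_sq (i : Fin m) :
    svUnsorted A i ^ 2 = (Matrix.isHermitian_mul_conjTranspose_self A).eigenvalues i :=
  Real.sq_sqrt (Matrix.eigenvalues_self_mul_conjTranspose_nonneg A i)

/-- orthonormality of the eigenvector family -/
lemma u_orth (i i' : Fin m) :
    ∑ t, u A i t * u A i' t = if i = i' then 1 else 0 := by
  have h := orthonormal_iff_ite.mp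
    (Matrix.isHermitian_mul_conjTranspose_self A).eigenvectorBasis.orthonormal i i'
  rw [PiLp.inner_apply] at h
  simpa [conj_trivial, u, mul_comm] using h

/-- completeness of the eigenvector family -/
lemma u_complete (s t : Fin m) :
    ∑ i, u A i s * u A i t = if s = t then 1 else 0 := by
  set hA := Matrix.isHermitian_mul_conjTranspose_self A
  have hU := Matrix.mem_unitaryGroup_iff.mp (Matrix.IsHermitian.eigenvectorUnitary hA).2
  have h2 := congrFun (congrFun hU s) t
  rw [Matrix.mul_apply, Matrix.one_apply] at h2
  simp only [Matrix.star_apply, Matrix.IsHermitian.eigenvectorUnitary_apply,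
    star_trivial] at h2
  simpa [u] using h2

lemma w_orth (i i' : Fin m) :
    ∑ t, w A i t * w A i' t
      = if i = i' then (svUnsorted A i)^2 else 0 := by
  set hA := Matrix.isHermitian_mul_conjTranspose_self A with hhA
  have key : ∑ t, w A i t * w A i' t
      = ∑ r, u A i r * ((A * Aᴴ) *ᵥ (u A i')) r := by
    simp only [w, Matrix.mulVec, dotProduct, Matrix.mul_apply,
      Matrix.conjTranspose_apply, star_trivial]
    calc ∑ t, (∑ r, A r t * u A i r) * (∑ s, A s t * u A i' s)
        = ∑ t, ∑ r, ∑ s, (A r t * u A i r) * (A s t * u A i' s) :=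
          Finset.sum_congr rfl fun t _ => by rw [Finset.sum_mul_sum]
      _ = ∑ r, ∑ t, ∑ s, (A r t * u A i r) * (A s t * u A i' s) := Finset.sum_comm
      _ = ∑ r, ∑ s, ∑ t, (A r t * u A i r) * (A s t * u A i' s) :=
          Finset.sum_congr rfl fun r _ => Finset.sum_comm
      _ = ∑ r, u A i r * ∑ s, (∑ t, A r t * A s t) * u A i' s := by
          refine Finset.sum_congr rfl fun r _ => ?_
          rw [Finset.mul_sum]
          refine Finset.sum_congr rfl fun s _ => ?_
          rw [Finset.sum_mul]
          rw [Finset.mul_sum]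
          refine Finset.sum_congr rfl fun t _ => ?_
          ring
  rw [key]
  have hmv : (A * Aᴴ) *ᵥ (u A i') = hA.eigenvalues i' • (u A i') :=
    hA.mulVec_eigenvectorBasis i'
  rw [hmv]
  simp only [Pi.smul_apply, smul_eq_mul]
  have : ∑ r, u A i r * (hA.eigenvalues i' * u A i' r)
      = hA.eigenvalues i' * ∑ r, u A i r * u A i' r := by
    rw [Finset.mul_sum]; exact Finset.sum_congr rfl fun r _ => by ring
  rw [this, u_orth]
  by_cases h : i = i'
  · subst h; simp [sv_sq]
  · simp [h]

lemma w_eq_sv_smul_v (i : Fin m) (t : Fin n) :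
    w A i t = svUnsorted A i * v A i t := by
  by_cases h : svUnsorted A i = 0
  · have hw : ∑ t', w A i t' * w A i t' = 0 := by
      rw [w_orth A i i]; simp [h]
    have : w A i t = 0 := by
      have hz := (Finset.sum_eq_zero_iff_of_nonneg
        (fun t' _ => mul_self_nonneg (w A i t'))).mp hw t (Finset.mem_univ t)
      exact mul_self_eq_zero.mp hz
    simp [this, v, h]
  · rw [v]
    field_simp

lemma v_orth (i i' : Fin m) (h : i ≠ i') : ∑ t, v A i t * v A i' t = 0 := by
  simp only [v]
  have : ∑ t, (svUnsorted A i)⁻¹ * w A i t * ((svUnsorted A i')⁻¹ * w A i' t)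
      = (svUnsorted A i)⁻¹ * (svUnsorted A i')⁻¹ * ∑ t, w A i t * w A i' t := by
    rw [Finset.mul_sum]; exact Finset.sum_congr rfl fun t _ => by ring
  rw [this, w_orth]
  simp [h]

lemma v_norm_le (i : Fin m) : ∑ t, v A i t * v A i t ≤ 1 := by
  simp only [v]
  have : ∑ t, (svUnsorted A i)⁻¹ * w A i t * ((svUnsorted A i)⁻¹ * w A i t)
      = (svUnsorted A i)⁻¹ * (svUnsorted A i)⁻¹ * ∑ t, w A i t * w A i t := by
    rw [Finset.mul_sum]; exact Finset.sum_congr rfl fun t _ => by ring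
  rw [this, w_orth, if_pos rfl]
  by_cases h : svUnsorted A i = 0
  · simp [h]
  · rw [sq]
    rw [show (svUnsorted A i)⁻¹ * (svUnsorted A i)⁻¹ * (svUnsorted A i * svUnsorted A i)
      = ((svUnsorted A i)⁻¹ * svUnsorted A i) * ((svUnsorted A i)⁻¹ * svUnsorted A i) by ring]
    rw [inv_mul_cancel₀ h]
    simp

/-- the SVD-style decomposition -/
lemma decomp (s : Fin m) (t : Fin n) :
    A s t = ∑ i, svUnsorted A i * u A i s * v A i t := by
  have h1 : A s t = ∑ i, u A i s * w A i t := by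
    simp only [w, Finset.mul_sum]
    rw [Finset.sum_comm]
    have : ∀ r, ∑ i, u A i s * (A r t * u A i r) = A r t * ∑ i, u A i s * u A i r := by
      intro r; rw [Finset.mul_sum]; exact Finset.sum_congr rfl fun i _ => by ring
    rw [Finset.sum_congr rfl fun r _ => this r]
    rw [Finset.sum_congr rfl fun r _ => by rw [u_complete]]
    simp [Finset.sum_ite_eq' Finset.univ s (fun r => A r t)]
  rw [h1]
  refine Finset.sum_congr rfl fun i _ => ?_
  rw [w_eq_sv_smul_v]
  ring

end SVDAux
open Finset Matrix

lemma sum4_comm' {α β γ δ : Type*} (s : Finset α) (t : Finset β) (u : Finset γ)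
    (v : Finset δ) (f : α → β → γ → δ → ℝ) :
    ∑ i ∈ s, ∑ j ∈ t, ∑ k ∈ u, ∑ l ∈ v, f i j k l
      = ∑ k ∈ u, ∑ l ∈ v, ∑ i ∈ s, ∑ j ∈ t, f i j k l :=
  calc ∑ i ∈ s, ∑ j ∈ t, ∑ k ∈ u, ∑ l ∈ v, f i j k l
      = ∑ i ∈ s, ∑ k ∈ u, ∑ j ∈ t, ∑ l ∈ v, f i j k l :=
        Finset.sum_congr rfl fun _ _ => Finset.sum_comm
    _ = ∑ k ∈ u, ∑ i ∈ s, ∑ j ∈ t, ∑ l ∈ v, f i j k l := Finset.sum_comm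
    _ = ∑ k ∈ u, ∑ i ∈ s, ∑ l ∈ v, ∑ j ∈ t, f i j k l :=
        Finset.sum_congr rfl fun _ _ => Finset.sum_congr rfl fun _ _ => Finset.sum_comm
    _ = ∑ k ∈ u, ∑ l ∈ v, ∑ i ∈ s, ∑ j ∈ t, f i j k l :=
        Finset.sum_congr rfl fun _ _ => Finset.sum_comm

/-- expansion of the Frobenius inner product through two rank-one decompositions -/
lemma trace_expand {m n : ℕ} (A B : Matrix (Fin m) (Fin n) ℝ)
    (a b : Fin m → ℝ) (p P : Fin m → Fin m → ℝ) (q Q : Fin m → Fin n → ℝ)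
    (hA : ∀ s t, A s t = ∑ i, a i * p i s * q i t)
    (hB : ∀ s t, B s t = ∑ j, b j * P j s * Q j t) :
    ∑ s, ∑ t, A s t * B s t
      = ∑ i, ∑ j, (a i * b j) * (∑ s, p i s * P j s) * (∑ t, q i t * Q j t) := by
  calc ∑ s, ∑ t, A s t * B s t
      = ∑ s, ∑ t, ∑ i, ∑ j, (a i * p i s * q i t) * (b j * P j s * Q j t) := by
        refine Finset.sum_congr rfl fun s _ => Finset.sum_congr rfl fun t _ => ?_
        rw [hA, hB, Finset.sum_mul_sum]
    _ = ∑ i, ∑ j, ∑ s, ∑ t, (a i * p i s * q i t) * (b j * P j s * Q j t) :=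
        sum4_comm' _ _ _ _ _
    _ = ∑ i, ∑ j, (a i * b j) * (∑ s, p i s * P j s) * (∑ t, q i t * Q j t) := by
        refine Finset.sum_congr rfl fun i _ => Finset.sum_congr rfl fun j _ => ?_
        rw [mul_assoc, Finset.sum_mul_sum, Finset.mul_sum]
        refine Finset.sum_congr rfl fun s _ => ?_
        rw [Finset.mul_sum]
        refine Finset.sum_congr rfl fun t _ => ?_
        ring
lemma fin_sum_ext {m : ℕ} (F : Fin m → ℝ) :
    ∑ i, F i = ∑ k ∈ range m, if h : k < m then F ⟨k, h⟩ else 0 := by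
  rw [← Fin.sum_univ_eq_sum_range (fun k => if h : k < m then F ⟨k, h⟩ else 0) m]
  exact Finset.sum_congr rfl fun i _ => by simp [i.isLt]

lemma substoch_fin {m : ℕ} (a b : Fin m → ℝ) (D : Fin m → Fin m → ℝ)
    (ha0 : ∀ i, 0 ≤ a i) (hb0 : ∀ i, 0 ≤ b i)
    (haA : Antitone a) (hbA : Antitone b)
    (hD0 : ∀ i j, 0 ≤ D i j)
    (hrow : ∀ i, ∑ j, D i j ≤ 1) (hcol : ∀ j, ∑ i, D i j ≤ 1) :
    ∑ i, ∑ j, D i j * a i * b j ≤ ∑ i, a i * b i := by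
  set a' : ℕ → ℝ := fun k => if h : k < m then a ⟨k, h⟩ else 0 with ha'
  set b' : ℕ → ℝ := fun k => if h : k < m then b ⟨k, h⟩ else 0 with hb'
  set D' : ℕ → ℕ → ℝ := fun k l =>
    if h : k < m ∧ l < m then D ⟨k, h.1⟩ ⟨l, h.2⟩ else 0 with hD'
  have step : ∀ (c : Fin m → ℝ) (c' : ℕ → ℝ), (∀ i, 0 ≤ c i) → Antitone c →
      (c' = fun k => if h : k < m then c ⟨k, h⟩ else 0) →
      (∀ k, 0 ≤ c' k) ∧ (∀ k, c' (k+1) ≤ c' k) ∧ c' m = 0 := by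
    intro c c' hc0 hcA hc'
    refine ⟨fun k => ?_, fun k => ?_, by simp [hc']⟩
    · rw [hc']; dsimp only; split
      · exact hc0 _
      · exact le_refl 0
    · rw [hc']; dsimp only
      rcases Nat.lt_or_ge (k+1) m with h1 | h1
      · have h2 : k < m := Nat.lt_of_succ_lt h1
        rw [dif_pos h1, dif_pos h2]
        exact hcA (by exact_mod_cast Nat.le_succ k)
      · rw [dif_neg (Nat.not_lt.mpr h1)]
        split
        · exact hc0 _
        · exact le_refl 0
  obtain ⟨ha'0, ha'A, ha'm⟩ := step a a' ha0 haA ha'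
  obtain ⟨hb'0, hb'A, hb'm⟩ := step b b' hb0 hbA hb'
  have hD'0 : ∀ k l, 0 ≤ D' k l := by
    intro k l; rw [hD']; dsimp only; split
    · exact hD0 _ _
    · exact le_refl 0
  have hL : ∑ i, ∑ j, D i j * a i * b j
      = ∑ k ∈ range m, ∑ l ∈ range m, D' k l * a' k * b' l := by
    rw [fin_sum_ext (fun i => ∑ j, D i j * a i * b j)]
    refine Finset.sum_congr rfl fun k hk => ?_
    have hkm := mem_range.mp hk
    rw [dif_pos hkm]
    rw [fin_sum_ext (fun j => D ⟨k, hkm⟩ j * a ⟨k, hkm⟩ * b j)]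
    refine Finset.sum_congr rfl fun l hl => ?_
    have hlm := mem_range.mp hl
    rw [dif_pos hlm, ha', hb', hD']
    dsimp only
    rw [dif_pos hkm, dif_pos hlm, dif_pos ⟨hkm, hlm⟩]
  have hR : ∑ i, a i * b i = ∑ k ∈ range m, a' k * b' k := by
    rw [fin_sum_ext (fun i => a i * b i)]
    refine Finset.sum_congr rfl fun k hk => ?_
    have hkm := mem_range.mp hk
    rw [dif_pos hkm, ha', hb']
    dsimp only
    rw [dif_pos hkm, dif_pos hkm]
  have hrow' : ∀ k, k < m → ∑ l ∈ range m, D' k l ≤ 1 := by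
    intro k hkm
    have : ∑ l ∈ range m, D' k l = ∑ j, D ⟨k, hkm⟩ j := by
      rw [fin_sum_ext (fun j => D ⟨k, hkm⟩ j)]
      refine Finset.sum_congr rfl fun l hl => ?_
      have hlm := mem_range.mp hl
      rw [dif_pos hlm, hD']
      dsimp only
      rw [dif_pos ⟨hkm, hlm⟩]
    rw [this]; exact hrow _
  have hcol' : ∀ l, l < m → ∑ k ∈ range m, D' k l ≤ 1 := by
    intro l hlm
    have : ∑ k ∈ range m, D' k l = ∑ i, D i ⟨l, hlm⟩ := by
      rw [fin_sum_ext (fun i => D i ⟨l, hlm⟩)]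
      refine Finset.sum_congr rfl fun k hk => ?_
      have hkm := mem_range.mp hk
      rw [dif_pos hkm, hD']
      dsimp only
      rw [dif_pos ⟨hkm, hlm⟩]
    rw [this]; exact hcol _
  rw [hL, hR]
  exact substoch_rearrange m a' b' D' ha'0 hb'0 ha'A hb'A ha'm hb'm hD'0 hrow' hcol'
/-- `singularValues A i` is the `i`-th largest singular value of `A`. -/
noncomputable def singularValues {m n : ℕ} (A : Matrix (Fin m) (Fin n) ℝ) : Fin m → ℝ :=
  fun i => svUnsorted A (Tuple.sort (fun j => - svUnsorted A j) i)

namespace SVDAux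

variable {m n : ℕ} (A : Matrix (Fin m) (Fin n) ℝ)

lemma sValues_antitone : Antitone (singularValues A) := by
  have h := Tuple.monotone_sort (fun j => - svUnsorted A j)
  intro i j hij
  have h2 : - svUnsorted A (Tuple.sort (fun j => - svUnsorted A j) i)
      ≤ - svUnsorted A (Tuple.sort (fun j => - svUnsorted A j) j) := h hij
  simp only [singularValues]
  linarith

lemma v_norm_eq (i : Fin m) :
    ∑ t, v A i t * v A i t = if svUnsorted A i = 0 then 0 else 1 := by
  have key : ∑ t, v A i t * v A i t
      = (svUnsorted A i)⁻¹ * (svUnsorted A i)⁻¹ * ∑ t, w A i t * w A i t := by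
    rw [Finset.mul_sum]
    exact Finset.sum_congr rfl fun t _ => by rw [v]; ring
  rw [key, w_orth, if_pos rfl]
  by_cases h : svUnsorted A i = 0
  · simp [h]
  · rw [if_neg h, sq]
    rw [show (svUnsorted A i)⁻¹ * (svUnsorted A i)⁻¹ * (svUnsorted A i * svUnsorted A i)
      = ((svUnsorted A i)⁻¹ * svUnsorted A i) * ((svUnsorted A i)⁻¹ * svUnsorted A i) by ring]
    rw [inv_mul_cancel₀ h, one_mul]

/-- Frobenius norm squared equals sum of squared singular values. -/
lemma frob_eq : ∑ s, ∑ t, A s t * A s t = ∑ i, singularValues A i ^ 2 := by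
  have h1 := trace_expand A A (svUnsorted A) (svUnsorted A) (u A) (u A) (v A) (v A)
    (decomp A) (decomp A)
  rw [h1]
  have h2 : ∀ i : Fin m, ∑ j, (svUnsorted A i * svUnsorted A j)
      * (∑ s, u A i s * u A j s) * (∑ t, v A i t * v A j t) = svUnsorted A i ^ 2 := by
    intro i
    rw [Finset.sum_eq_single i]
    · rw [u_orth, if_pos rfl, v_norm_eq]
      by_cases h : svUnsorted A i = 0
      · simp [h]
      · rw [if_neg h]; ring
    · intro j _ hji
      rw [u_orth, if_neg (Ne.symm hji)]
      ring
    · intro h; exact absurd (Finset.mem_univ i) h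
  rw [Finset.sum_congr rfl fun i _ => h2 i]
  calc ∑ i, svUnsorted A i ^ 2
      = ∑ i, (fun k => svUnsorted A k ^ 2) ((Tuple.sort (fun j => - svUnsorted A j)) i) :=
        (Equiv.sum_comp (Tuple.sort (fun j => - svUnsorted A j))
          (fun k => svUnsorted A k ^ 2)).symm
    _ = ∑ i, singularValues A i ^ 2 := rfl

end SVDAux

open SVDAux in
/-- von Neumann's trace inequality. -/
lemma vonNeumann {m n : ℕ} (A B : Matrix (Fin m) (Fin n) ℝ) :
    ∑ s, ∑ t, A s t * B s t ≤ ∑ i, singularValues A i * singularValues B i := by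
  classical
  set π := Tuple.sort (fun j => - svUnsorted A j) with hπ
  set ρ := Tuple.sort (fun j => - svUnsorted B j) with hρ
  set D : Fin m → Fin m → ℝ := fun i j =>
    ((∑ s, u A (π i) s * u B (ρ j) s)^2 + (∑ t, v A (π i) t * v B (ρ j) t)^2) / 2 with hD
  have hD0 : ∀ i j, 0 ≤ D i j := fun i j => by
    rw [hD]; positivity
  have huA1 : ∀ i : Fin m, ∑ s, u A i s * u A i s = 1 := fun i => by
    rw [u_orth, if_pos rfl]
  have huB1 : ∀ j : Fin m, ∑ s, u B j s * u B j s = 1 := fun j => by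
    rw [u_orth, if_pos rfl]
  -- row sums of D
  have hrow : ∀ i, ∑ j, D i j ≤ 1 := by
    intro i
    have hP : ∑ j, (∑ s, u A (π i) s * u B (ρ j) s)^2 ≤ 1 := by
      have hb := bessel_raw (fun j => u B (ρ j))
        (fun j j' hjj' => by
          rw [u_orth, if_neg (fun h => hjj' (ρ.injective h))])
        (fun j => le_of_eq (huB1 (ρ j))) (u A (π i))
      calc ∑ j, (∑ s, u A (π i) s * u B (ρ j) s)^2
          = ∑ j, (∑ s, u B (ρ j) s * u A (π i) s)^2 := by
            refine Finset.sum_congr rfl fun j _ => ?_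
            rw [Finset.sum_congr rfl fun s _ => mul_comm (u A (π i) s) (u B (ρ j) s)]
        _ ≤ ∑ s, u A (π i) s * u A (π i) s := hb
        _ = 1 := huA1 (π i)
    have hQ : ∑ j, (∑ t, v A (π i) t * v B (ρ j) t)^2 ≤ 1 := by
      have hb := bessel_raw (fun j => v B (ρ j))
        (fun j j' hjj' => v_orth B (ρ j) (ρ j') (fun h => hjj' (ρ.injective h)))
        (fun j => v_norm_le B (ρ j)) (v A (π i))
      calc ∑ j, (∑ t, v A (π i) t * v B (ρ j) t)^2
          = ∑ j, (∑ t, v B (ρ j) t * v A (π i) t)^2 := by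
            refine Finset.sum_congr rfl fun j _ => ?_
            rw [Finset.sum_congr rfl fun t _ => mul_comm (v A (π i) t) (v B (ρ j) t)]
        _ ≤ ∑ t, v A (π i) t * v A (π i) t := hb
        _ ≤ 1 := v_norm_le A (π i)
    rw [hD]
    simp only
    rw [← Finset.sum_div, Finset.sum_add_distrib]
    linarith
  -- column sums of D
  have hcol : ∀ j, ∑ i, D i j ≤ 1 := by
    intro j
    have hP : ∑ i, (∑ s, u A (π i) s * u B (ρ j) s)^2 ≤ 1 := by
      have hb := bessel_raw (fun i => u A (π i))
        (fun i i' hii' => by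
          rw [u_orth, if_neg (fun h => hii' (π.injective h))])
        (fun i => le_of_eq (huA1 (π i))) (u B (ρ j))
      calc ∑ i, (∑ s, u A (π i) s * u B (ρ j) s)^2
          ≤ ∑ s, u B (ρ j) s * u B (ρ j) s := hb
        _ = 1 := huB1 (ρ j)
    have hQ : ∑ i, (∑ t, v A (π i) t * v B (ρ j) t)^2 ≤ 1 := by
      have hb := bessel_raw (fun i => v A (π i))
        (fun i i' hii' => v_orth A (π i) (π i') (fun h => hii' (π.injective h)))
        (fun i => v_norm_le A (π i)) (v B (ρ j))
      calc ∑ i, (∑ t, v A (π i) t * v B (ρ j) t)^2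
          ≤ ∑ t, v B (ρ j) t * v B (ρ j) t := hb
        _ ≤ 1 := v_norm_le B (ρ j)
    rw [hD]
    simp only
    rw [← Finset.sum_div, Finset.sum_add_distrib]
    linarith
  -- main chain
  have hAB := trace_expand A B (svUnsorted A) (svUnsorted B) (u A) (u B) (v A) (v B)
    (decomp A) (decomp B)
  set f : Fin m → Fin m → ℝ := fun i j => (svUnsorted A i * svUnsorted B j)
    * (∑ s, u A i s * u B j s) * (∑ t, v A i t * v B j t) with hf
  have hreindex : ∑ i, ∑ j, f i j = ∑ i, ∑ j, f (π i) (ρ j) := by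
    rw [← Equiv.sum_comp π (fun i => ∑ j, f i j)]
    exact Finset.sum_congr rfl fun i _ => (Equiv.sum_comp ρ (fun j => f (π i) j)).symm
  have hterm : ∀ i j : Fin m, f (π i) (ρ j)
      ≤ D i j * singularValues A i * singularValues B j := by
    intro i j
    have hXY : (∑ s, u A (π i) s * u B (ρ j) s) * (∑ t, v A (π i) t * v B (ρ j) t)
        ≤ D i j := by
      rw [hD]
      nlinarith [sq_nonneg ((∑ s, u A (π i) s * u B (ρ j) s)
        - (∑ t, v A (π i) t * v B (ρ j) t))]
    have hab : 0 ≤ svUnsorted A (π i) * svUnsorted B (ρ j) :=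
      mul_nonneg (sv_nonneg A _) (sv_nonneg B _)
    have := mul_le_mul_of_nonneg_left hXY hab
    calc f (π i) (ρ j) = (svUnsorted A (π i) * svUnsorted B (ρ j))
          * ((∑ s, u A (π i) s * u B (ρ j) s) * (∑ t, v A (π i) t * v B (ρ j) t)) := by
          rw [hf]; ring
      _ ≤ (svUnsorted A (π i) * svUnsorted B (ρ j)) * D i j := this
      _ = D i j * singularValues A i * singularValues B j := by
          rw [singularValues, singularValues, ← hπ, ← hρ]; ring
  calc ∑ s, ∑ t, A s t * B s t = ∑ i, ∑ j, f i j := hAB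
    _ = ∑ i, ∑ j, f (π i) (ρ j) := hreindex
    _ ≤ ∑ i, ∑ j, D i j * singularValues A i * singularValues B j :=
        Finset.sum_le_sum fun i _ => Finset.sum_le_sum fun j _ => hterm i j
    _ ≤ ∑ i, singularValues A i * singularValues B i := by
        refine substoch_fin (singularValues A) (singularValues B) D
          (fun i => sv_nonneg A _) (fun i => sv_nonneg B _)
          (sValues_antitone A) (sValues_antitone B) hD0 hrow hcol

/-- The squared Frobenius distance dominates the squared Euclidean distance
between the (sorted) singular value vectors. -/
theorem frobenius_sq_ge_sum_sq_singular_value_diff {m n : ℕ} (hmn : m ≤ n)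
    (A B : Matrix (Fin m) (Fin n) ℝ) :
    ∑ i : Fin m, ∑ j : Fin n, (A i j - B i j)^2 ≥
      ∑ i : Fin m, (singularValues A i - singularValues B i)^2 := by
  have hL : ∑ i : Fin m, ∑ j : Fin n, (A i j - B i j)^2
      = ∑ i, ∑ j, A i j * A i j - 2 * ∑ i, ∑ j, A i j * B i j
        + ∑ i, ∑ j, B i j * B i j := by
    have h0 : ∀ (i : Fin m) (j : Fin n), (A i j - B i j)^2
        = A i j * A i j - 2 * (A i j * B i j) + B i j * B i j := fun i j => by ring
    rw [Finset.sum_congr rfl fun i _ => Finset.sum_congr rfl fun j _ => h0 i j]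
    simp only [Finset.sum_add_distrib, Finset.sum_sub_distrib, ← Finset.mul_sum]
  have hR : ∑ i : Fin m, (singularValues A i - singularValues B i)^2
      = ∑ i, singularValues A i ^ 2 - 2 * ∑ i, singularValues A i * singularValues B i
        + ∑ i, singularValues B i ^ 2 := by
    have h0 : ∀ i : Fin m, (singularValues A i - singularValues B i)^2
        = singularValues A i ^ 2 - 2 * (singularValues A i * singularValues B i)
          + singularValues B i ^ 2 := fun i => by ring
    rw [Finset.sum_congr rfl fun i _ => h0 i]
    simp only [Finset.sum_add_distrib, Finset.sum_sub_distrib, ← Finset.mul_sum]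
  rw [ge_iff_le, hL, hR, SVDAux.frob_eq A, SVDAux.frob_eq B]
  have := vonNeumann A B
  linarith
end

section
/- For any real m × n matrices A and B (with m ≤ n), Tr(AᵀB) ≤ ∑_{i=1}^m σᵢ(A) σᵢ(B), where σ₁(·) ≥ ⋯ ≥ σ_m(·) ≥ 0 are the singular values (von Neumann's trace inequality). -/
open Finset Matrix

private lemma sum_dotProduct' {ι κ : Type*} [Fintype κ] (s : Finset ι)
    (f : ι → κ → ℝ) (w : κ → ℝ) :
    dotProduct (∑ i ∈ s, f i) w = ∑ i ∈ s, dotProduct (f i) w := by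
  unfold dotProduct
  rw [Finset.sum_comm]
  refine Finset.sum_congr rfl fun k _ => ?_
  rw [Finset.sum_apply, Finset.sum_mul]

private lemma dotProduct_sum' {ι κ : Type*} [Fintype κ] (s : Finset ι)
    (w : κ → ℝ) (f : ι → κ → ℝ) :
    dotProduct w (∑ i ∈ s, f i) = ∑ i ∈ s, dotProduct w (f i) := by
  rw [dotProduct_comm, sum_dotProduct']
  exact Finset.sum_congr rfl fun i _ => dotProduct_comm _ _

private lemma dot_bessel {ι κ : Type*} [Fintype ι] [DecidableEq ι] [Fintype κ]
    (v : ι → κ → ℝ) (e : ι → ℝ) (he : ∀ i, e i ≤ 1)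
    (hv : ∀ i k, dotProduct (v i) (v k) = if i = k then e i else 0)
    (x : κ → ℝ) :
    ∑ i, (dotProduct (v i) x) ^ 2 ≤ dotProduct x x := by
  classical
  set c : ι → ℝ := fun i => dotProduct (v i) x with hc
  set z : κ → ℝ := ∑ i, c i • v i with hz
  have h1 : dotProduct z x = ∑ i, c i ^ 2 := by
    rw [hz, sum_dotProduct']
    refine Finset.sum_congr rfl fun i _ => ?_
    rw [smul_dotProduct]
    simp [hc, sq, smul_eq_mul]
  have h2 : dotProduct z z = ∑ i, c i ^ 2 * e i := by
    rw [hz, sum_dotProduct']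
    refine Finset.sum_congr rfl fun i _ => ?_
    rw [smul_dotProduct, dotProduct_sum']
    simp only [dotProduct_smul, hv, smul_eq_mul, mul_ite, mul_zero]
    rw [Finset.sum_ite_eq Finset.univ i fun k => c k * e i]
    simp [sq]; ring
  have h0 : (0:ℝ) ≤ dotProduct (x - z) (x - z) := by
    unfold dotProduct
    exact Finset.sum_nonneg fun k _ => mul_self_nonneg _
  have hexp : dotProduct (x - z) (x - z)
      = dotProduct x x - 2 * dotProduct z x + dotProduct z z := by
    rw [sub_dotProduct, dotProduct_sub, dotProduct_sub]
    rw [dotProduct_comm x z]; ring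
  have key : ∑ i, c i ^ 2 ≤ ∑ i, c i ^ 2 * (2 - e i) := by
    refine Finset.sum_le_sum fun i _ => ?_
    nlinarith [sq_nonneg (c i), he i]
  have h3 : ∑ i, c i ^ 2 * (2 - e i) = 2 * (∑ i, c i ^ 2) - ∑ i, c i ^ 2 * e i := by
    rw [Finset.mul_sum, ← Finset.sum_sub_distrib]
    refine Finset.sum_congr rfl fun i _ => by ring
  rw [h3] at key
  rw [hexp, h1, h2] at h0
  linarith

open Finset Matrix in

private lemma abel_rearrange (m : ℕ) (a b : ℕ → ℝ) (E : ℕ → ℕ → ℝ)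
    (ha : ∀ k, a (k+1) ≤ a k) (ha0 : a m = 0)
    (hb : ∀ k, b (k+1) ≤ b k) (hb0 : b m = 0)
    (hE : ∀ i j, 0 ≤ E i j)
    (hrow : ∀ i, i < m → ∑ j ∈ range m, E i j ≤ 1)
    (hcol : ∀ j, j < m → ∑ i ∈ range m, E i j ≤ 1) :
    ∑ i ∈ range m, ∑ j ∈ range m, a i * b j * E i j ≤ ∑ i ∈ range m, a i * b i := by
  -- telescoping representation
  have key : ∀ c : ℕ → ℝ, (∀ k, c (k+1) ≤ c k) → c m = 0 → ∀ i, i < m →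
      c i = ∑ k ∈ range m, (if i ≤ k then c k - c (k+1) else 0) := by
    intro c hc hc0 i hi
    rw [Finset.sum_ite, Finset.sum_const_zero, add_zero]
    have hf : Finset.filter (fun k => i ≤ k) (range m) = Finset.Ico i m := by
      ext k; simp [Finset.mem_Ico]; omega
    rw [hf, Finset.sum_Ico_eq_sum_range]
    have htel := Finset.sum_range_sub' (fun t => c (i + t)) (m - i)
    simp only [add_zero] at htel
    calc c i = c i - c (i + (m - i)) := by
              rw [show i + (m-i) = m by omega, hc0, sub_zero]
      _ = ∑ t ∈ range (m - i), (c (i + t) - c (i + (t + 1))) := htel.symm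
      _ = ∑ t ∈ range (m - i), (c (i + t) - c (i + t + 1)) := by
              exact Finset.sum_congr rfl fun t _ => by rw [add_assoc]
  have hΔa : ∀ k, 0 ≤ a k - a (k+1) := fun k => sub_nonneg.mpr (ha k)
  have hΔb : ∀ k, 0 ≤ b k - b (k+1) := fun k => sub_nonneg.mpr (hb k)
  set S : ℕ → ℕ → ℝ := fun k l =>
    ∑ i ∈ range m, ∑ j ∈ range m, (if i ≤ k ∧ j ≤ l then E i j else 0) with hS
  -- identity 1
  have I1 : ∑ i ∈ range m, ∑ j ∈ range m, a i * b j * E i j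
      = ∑ k ∈ range m, ∑ l ∈ range m, (a k - a (k+1)) * (b l - b (l+1)) * S k l := by
    have step : ∀ i ∈ range m, ∀ j ∈ range m, a i * b j * E i j
        = ∑ k ∈ range m, ∑ l ∈ range m,
          ((if i ≤ k then a k - a (k+1) else 0) * (if j ≤ l then b l - b (l+1) else 0) * E i j) := by
      intro i hi j hj
      rw [key a ha ha0 i (mem_range.mp hi), key b hb hb0 j (mem_range.mp hj)]
      rw [Finset.sum_mul_sum, Finset.sum_mul]
      refine Finset.sum_congr rfl fun k _ => ?_
      rw [Finset.sum_mul]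
    calc ∑ i ∈ range m, ∑ j ∈ range m, a i * b j * E i j
        = ∑ i ∈ range m, ∑ j ∈ range m, ∑ k ∈ range m, ∑ l ∈ range m,
            ((if i ≤ k then a k - a (k+1) else 0) * (if j ≤ l then b l - b (l+1) else 0) * E i j) := by
          refine Finset.sum_congr rfl fun i hi => Finset.sum_congr rfl fun j hj => step i hi j hj
      _ = ∑ i ∈ range m, ∑ k ∈ range m, ∑ j ∈ range m, ∑ l ∈ range m,
            ((if i ≤ k then a k - a (k+1) else 0) * (if j ≤ l then b l - b (l+1) else 0) * E i j) := by
          exact Finset.sum_congr rfl fun i _ => Finset.sum_comm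
      _ = ∑ k ∈ range m, ∑ i ∈ range m, ∑ j ∈ range m, ∑ l ∈ range m,
            ((if i ≤ k then a k - a (k+1) else 0) * (if j ≤ l then b l - b (l+1) else 0) * E i j) := by
          exact Finset.sum_comm
      _ = ∑ k ∈ range m, ∑ i ∈ range m, ∑ l ∈ range m, ∑ j ∈ range m,
            ((if i ≤ k then a k - a (k+1) else 0) * (if j ≤ l then b l - b (l+1) else 0) * E i j) := by
          exact Finset.sum_congr rfl fun k _ => Finset.sum_congr rfl fun i _ => Finset.sum_comm
      _ = ∑ k ∈ range m, ∑ l ∈ range m, ∑ i ∈ range m, ∑ j ∈ range m,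
            ((if i ≤ k then a k - a (k+1) else 0) * (if j ≤ l then b l - b (l+1) else 0) * E i j) := by
          exact Finset.sum_congr rfl fun k _ => Finset.sum_comm
      _ = ∑ k ∈ range m, ∑ l ∈ range m, (a k - a (k+1)) * (b l - b (l+1)) * S k l := by
          refine Finset.sum_congr rfl fun k _ => Finset.sum_congr rfl fun l _ => ?_
          rw [hS]
          rw [Finset.mul_sum]
          refine Finset.sum_congr rfl fun i _ => ?_
          rw [Finset.mul_sum]
          refine Finset.sum_congr rfl fun j _ => ?_
          by_cases h1 : i ≤ k <;> by_cases h2 : j ≤ l <;> simp [h1, h2]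
  -- identity 2
  have cnt : ∀ k ∈ range m, ∀ l ∈ range m,
      ∑ i ∈ range m, (if i ≤ k ∧ i ≤ l then (1:ℝ) else 0) = (min (k+1) (l+1) : ℕ) := by
    intro k hk l hl
    rw [Finset.sum_ite, Finset.sum_const_zero, add_zero, Finset.sum_const]
    have : Finset.filter (fun i => i ≤ k ∧ i ≤ l) (range m) = range (min (k+1) (l+1)) := by
      have hk' := mem_range.mp hk; have hl' := mem_range.mp hl
      ext i
      simp only [Finset.mem_filter, Finset.mem_range, lt_min_iff]
      omega
    rw [this, Finset.card_range]
    simp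
  have I2 : ∑ i ∈ range m, a i * b i
      = ∑ k ∈ range m, ∑ l ∈ range m,
        (a k - a (k+1)) * (b l - b (l+1)) * (min (k+1) (l+1) : ℕ) := by
    calc ∑ i ∈ range m, a i * b i
        = ∑ i ∈ range m, ∑ k ∈ range m, ∑ l ∈ range m,
            ((if i ≤ k then a k - a (k+1) else 0) * (if i ≤ l then b l - b (l+1) else 0)) := by
          refine Finset.sum_congr rfl fun i hi => ?_
          rw [key a ha ha0 i (mem_range.mp hi), key b hb hb0 i (mem_range.mp hi),
            Finset.sum_mul_sum]
      _ = ∑ k ∈ range m, ∑ i ∈ range m, ∑ l ∈ range m,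
            ((if i ≤ k then a k - a (k+1) else 0) * (if i ≤ l then b l - b (l+1) else 0)) := by
          exact Finset.sum_comm
      _ = ∑ k ∈ range m, ∑ l ∈ range m, ∑ i ∈ range m,
            ((if i ≤ k then a k - a (k+1) else 0) * (if i ≤ l then b l - b (l+1) else 0)) := by
          exact Finset.sum_congr rfl fun k _ => Finset.sum_comm
      _ = ∑ k ∈ range m, ∑ l ∈ range m,
            (a k - a (k+1)) * (b l - b (l+1)) * (min (k+1) (l+1) : ℕ) := by
          refine Finset.sum_congr rfl fun k hk => Finset.sum_congr rfl fun l hl => ?_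
          rw [← cnt k hk l hl, Finset.mul_sum]
          refine Finset.sum_congr rfl fun i _ => ?_
          by_cases h1 : i ≤ k <;> by_cases h2 : i ≤ l <;> simp [h1, h2] <;> ring
  -- bound on S
  have I3 : ∀ k ∈ range m, ∀ l ∈ range m, S k l ≤ (min (k+1) (l+1) : ℕ) := by
    intro k hk l hl
    have hSrow : S k l ≤ (k+1 : ℕ) := by
      have h1 : S k l ≤ ∑ i ∈ range m, (if i ≤ k then (1:ℝ) else 0) := by
        rw [hS]
        refine Finset.sum_le_sum fun i hi' => ?_
        by_cases h1 : i ≤ k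
        · simp only [h1, true_and, if_true]
          calc ∑ j ∈ range m, (if j ≤ l then E i j else 0)
              ≤ ∑ j ∈ range m, E i j := by
                refine Finset.sum_le_sum fun j _ => ?_
                by_cases h2 : j ≤ l <;> simp [h2, hE i j]
            _ ≤ 1 := hrow i (mem_range.mp hi')
        · simp [h1]
      calc S k l ≤ ∑ i ∈ range m, (if i ≤ k then (1:ℝ) else 0) := h1
        _ = (k+1 : ℕ) := by
            rw [Finset.sum_ite, Finset.sum_const_zero, add_zero, Finset.sum_const]
            have : Finset.filter (fun i => i ≤ k) (range m) = range (k+1) := by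
              ext i; simp only [Finset.mem_filter, Finset.mem_range]
              have := mem_range.mp hk; omega
            rw [this, Finset.card_range]; simp
    have hScol : S k l ≤ (l+1 : ℕ) := by
      have hswap : S k l = ∑ j ∈ range m, ∑ i ∈ range m, (if i ≤ k ∧ j ≤ l then E i j else 0) := by
        rw [hS]; exact Finset.sum_comm
      have h1 : S k l ≤ ∑ j ∈ range m, (if j ≤ l then (1:ℝ) else 0) := by
        rw [hswap]
        refine Finset.sum_le_sum fun j hj' => ?_
        by_cases h2 : j ≤ l
        · simp only [h2, and_true, if_true]
          calc ∑ i ∈ range m, (if i ≤ k then E i j else 0)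
              ≤ ∑ i ∈ range m, E i j := by
                refine Finset.sum_le_sum fun i _ => ?_
                by_cases h1 : i ≤ k <;> simp [h1, hE i j]
            _ ≤ 1 := hcol j (mem_range.mp hj')
        · simp [h2]
      calc S k l ≤ ∑ j ∈ range m, (if j ≤ l then (1:ℝ) else 0) := h1
        _ = (l+1 : ℕ) := by
            rw [Finset.sum_ite, Finset.sum_const_zero, add_zero, Finset.sum_const]
            have : Finset.filter (fun j => j ≤ l) (range m) = range (l+1) := by
              ext j; simp only [Finset.mem_filter, Finset.mem_range]
              have := mem_range.mp hl; omega
            rw [this, Finset.card_range]; simp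
    rcases le_total (k+1) (l+1) with h | h
    · rw [min_eq_left h]; exact hSrow
    · rw [min_eq_right h]; exact hScol
  rw [I1, I2]
  refine Finset.sum_le_sum fun k hk => Finset.sum_le_sum fun l hl => ?_
  exact mul_le_mul_of_nonneg_left (I3 k hk l hl) (mul_nonneg (hΔa k) (hΔb l))

/-- von Neumann's trace inequality. -/
theorem von_neumann_trace_inequality {m n : ℕ} (hmn : m ≤ n)
    (A B : Matrix (Fin m) (Fin n) ℝ) :
    Matrix.trace (Matrix.transpose A * B) ≤ ∑ i : Fin m, singularValues A i * singularValues B i := by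

  classical
  have hA := Matrix.isHermitian_mul_conjTranspose_self A
  have hB := Matrix.isHermitian_mul_conjTranspose_self B
  set u : Fin m → (Fin m → ℝ) := fun i => ⇑(hA.eigenvectorBasis i) with hu
  set w : Fin m → (Fin m → ℝ) := fun j => ⇑(hB.eigenvectorBasis j) with hw
  set x : Fin m → (Fin n → ℝ) := fun i => Aᵀ *ᵥ u i with hx
  set y : Fin m → (Fin n → ℝ) := fun j => Bᵀ *ᵥ w j with hy
  set sA : Fin m → ℝ := svUnsorted A with hsA
  set sB : Fin m → ℝ := svUnsorted B with hsB
  -- orthonormality in dotProduct form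
  have du : ∀ i k, dotProduct (u i) (u k) = if i = k then 1 else 0 := by
    intro i k
    have := orthonormal_iff_ite.mp hA.eigenvectorBasis.orthonormal i k
    simpa [PiLp.inner_apply, RCLike.inner_apply, conj_trivial, dotProduct, mul_comm, hu] using this
  have dw : ∀ i k, dotProduct (w i) (w k) = if i = k then 1 else 0 := by
    intro i k
    have := orthonormal_iff_ite.mp hB.eigenvectorBasis.orthonormal i k
    simpa [PiLp.inner_apply, RCLike.inner_apply, conj_trivial, dotProduct, mul_comm, hw] using this
  -- Gram facts
  have dxx : ∀ i k, dotProduct (x i) (x k) = if i = k then hA.eigenvalues i else 0 := by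
    intro i k
    rw [hx]
    simp only
    rw [Matrix.mulVec_transpose, ← Matrix.dotProduct_mulVec, Matrix.mulVec_mulVec,
      ← Matrix.conjTranspose_eq_transpose_of_trivial, hA.mulVec_eigenvectorBasis,
      dotProduct_smul, smul_eq_mul, du i k]
    by_cases h : i = k <;> simp [h]
  have dyy : ∀ i k, dotProduct (y i) (y k) = if i = k then hB.eigenvalues i else 0 := by
    intro i k
    rw [hy]
    simp only
    rw [Matrix.mulVec_transpose, ← Matrix.dotProduct_mulVec, Matrix.mulVec_mulVec,
      ← Matrix.conjTranspose_eq_transpose_of_trivial, hB.mulVec_eigenvectorBasis,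
      dotProduct_smul, smul_eq_mul, dw i k]
    by_cases h : i = k <;> simp [h]
  -- singular value facts
  have evA_nn : ∀ i, 0 ≤ hA.eigenvalues i := by
    intro i
    have := dxx i i
    simp at this
    refine le_of_le_of_eq ?_ this
    exact Finset.sum_nonneg fun k _ => mul_self_nonneg _
  have evB_nn : ∀ i, 0 ≤ hB.eigenvalues i := by
    intro i
    have := dyy i i
    simp at this
    refine le_of_le_of_eq ?_ this
    exact Finset.sum_nonneg fun k _ => mul_self_nonneg _
  have hsA_sq : ∀ i, sA i ^ 2 = hA.eigenvalues i := fun i =>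
    Real.sq_sqrt (evA_nn i)
  have hsB_sq : ∀ i, sB i ^ 2 = hB.eigenvalues i := fun i =>
    Real.sq_sqrt (evB_nn i)
  have hsA_nn : ∀ i, 0 ≤ sA i := fun i => Real.sqrt_nonneg _
  have hsB_nn : ∀ i, 0 ≤ sB i := fun i => Real.sqrt_nonneg _
  have hxz : ∀ i, sA i = 0 → x i = 0 := by
    intro i h
    have h2 : dotProduct (x i) (x i) = 0 := by
      rw [dxx i i, if_pos rfl, ← hsA_sq i, h]; ring
    exact dotProduct_self_eq_zero.mp h2
  have hyz : ∀ j, sB j = 0 → y j = 0 := by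
    intro j h
    have h2 : dotProduct (y j) (y j) = 0 := by
      rw [dyy j j, if_pos rfl, ← hsB_sq j, h]; ring
    exact dotProduct_self_eq_zero.mp h2
  set c : Fin m → Fin m → ℝ := fun i j => dotProduct (w j) (u i) with hc
  set g : Fin m → Fin m → ℝ := fun i j => dotProduct (y j) (x i) with hgdef
  set d : Fin m → Fin m → ℝ := fun i j => (sA i * sB j)⁻¹ * g i j with hd
  have hg : ∀ i j, g i j = sA i * sB j * d i j := by
    intro i j
    by_cases h1 : sA i = 0
    · rw [hgdef]; simp only
      rw [hxz i h1, dotProduct_zero, h1]; ring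
    by_cases h2 : sB j = 0
    · rw [hgdef]; simp only
      rw [hyz j h2, zero_dotProduct, h2]; ring
    · rw [hd]; simp only
      field_simp
  -- trace in orthonormal basis
  have trace_basis : ∀ M : Matrix (Fin m) (Fin m) ℝ,
      Matrix.trace M = ∑ i, dotProduct (u i) (M *ᵥ u i) := by
    intro M
    have hU : (hA.eigenvectorUnitary : Matrix (Fin m) (Fin m) ℝ)
        * (hA.eigenvectorUnitary : Matrix (Fin m) (Fin m) ℝ)ᵀ = 1 := by
      have h2 := Matrix.mem_unitaryGroup_iff.mp hA.eigenvectorUnitary.2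
      rw [Matrix.star_eq_conjTranspose] at h2
      rw [← Matrix.conjTranspose_eq_transpose_of_trivial]
      exact h2
    calc Matrix.trace M
        = Matrix.trace (M * ((hA.eigenvectorUnitary : Matrix (Fin m) (Fin m) ℝ)
            * (hA.eigenvectorUnitary : Matrix (Fin m) (Fin m) ℝ)ᵀ)) := by rw [hU, mul_one]
      _ = Matrix.trace ((hA.eigenvectorUnitary : Matrix (Fin m) (Fin m) ℝ)ᵀ
            * (M * (hA.eigenvectorUnitary : Matrix (Fin m) (Fin m) ℝ))) := by
          rw [← Matrix.mul_assoc, Matrix.trace_mul_comm]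
      _ = ∑ i, dotProduct (u i) (M *ᵥ u i) := by
          rw [Matrix.trace]
          refine Finset.sum_congr rfl fun i _ => ?_
          simp only [Matrix.diag_apply, Matrix.mul_apply, Matrix.transpose_apply,
            dotProduct, Matrix.mulVec, Matrix.IsHermitian.eigenvectorUnitary_apply,
            Finset.mul_sum]
          rfl
  -- identity-insertion via the w basis
  have winsert : ∀ v z : Fin m → ℝ, dotProduct v z = ∑ j, (dotProduct (w j) v) * (dotProduct (w j) z) := by
    intro v z
    have hW : (hB.eigenvectorUnitary : Matrix (Fin m) (Fin m) ℝ)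
        * (hB.eigenvectorUnitary : Matrix (Fin m) (Fin m) ℝ)ᵀ = 1 := by
      have h2 := Matrix.mem_unitaryGroup_iff.mp hB.eigenvectorUnitary.2
      rw [Matrix.star_eq_conjTranspose] at h2
      rw [← Matrix.conjTranspose_eq_transpose_of_trivial]
      exact h2
    have hWv : ∀ v : Fin m → ℝ,
        (hB.eigenvectorUnitary : Matrix (Fin m) (Fin m) ℝ)ᵀ *ᵥ v = fun j => dotProduct (w j) v := by
      intro v
      funext j
      simp only [Matrix.mulVec, Matrix.transpose_apply, dotProduct,
        Matrix.IsHermitian.eigenvectorUnitary_apply]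
      rfl
    calc dotProduct v z
        = dotProduct v (((hB.eigenvectorUnitary : Matrix (Fin m) (Fin m) ℝ)
            * (hB.eigenvectorUnitary : Matrix (Fin m) (Fin m) ℝ)ᵀ) *ᵥ z) := by
          rw [hW, Matrix.one_mulVec]
      _ = dotProduct v ((hB.eigenvectorUnitary : Matrix (Fin m) (Fin m) ℝ) *ᵥ
            ((hB.eigenvectorUnitary : Matrix (Fin m) (Fin m) ℝ)ᵀ *ᵥ z)) := by
          rw [Matrix.mulVec_mulVec]
      _ = dotProduct ((hB.eigenvectorUnitary : Matrix (Fin m) (Fin m) ℝ)ᵀ *ᵥ v)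
            ((hB.eigenvectorUnitary : Matrix (Fin m) (Fin m) ℝ)ᵀ *ᵥ z) := by
          rw [Matrix.dotProduct_mulVec v]
          congr 1
          rw [← Matrix.mulVec_transpose]
      _ = ∑ j, (dotProduct (w j) v) * (dotProduct (w j) z) := by
          rw [hWv, hWv, dotProduct]
  -- the trace identity
  have tr : Matrix.trace (Aᵀ * B) = ∑ i, ∑ j, c i j * g i j := by
    rw [Matrix.trace_mul_comm, trace_basis (B * Aᵀ)]
    refine Finset.sum_congr rfl fun i _ => ?_
    rw [← Matrix.mulVec_mulVec]
    rw [winsert (u i) (B *ᵥ (Aᵀ *ᵥ u i))]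
    refine Finset.sum_congr rfl fun j _ => ?_
    congr 1
    rw [hgdef]; simp only
    rw [Matrix.dotProduct_mulVec (w j), ← Matrix.mulVec_transpose]
  set E : Fin m → Fin m → ℝ := fun i j => (c i j ^ 2 + d i j ^ 2) / 2 with hE
  have hE0 : ∀ i j, 0 ≤ E i j := fun i j =>
    div_nonneg (add_nonneg (sq_nonneg _) (sq_nonneg _)) two_pos.le
  have hrowc : ∀ i, ∑ j, c i j ^ 2 ≤ 1 := by
    intro i
    have hbes := dot_bessel w (fun _ => (1:ℝ)) (fun _ => le_refl 1)
      (fun p q => by rw [dw p q]) (u i)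
    calc ∑ j, c i j ^ 2 = ∑ j, (dotProduct (w j) (u i)) ^ 2 := rfl
      _ ≤ dotProduct (u i) (u i) := hbes
      _ = 1 := by rw [du i i, if_pos rfl]
  have hcolc : ∀ j, ∑ i, c i j ^ 2 ≤ 1 := by
    intro j
    have hbes := dot_bessel u (fun _ => (1:ℝ)) (fun _ => le_refl 1)
      (fun p q => by rw [du p q]) (w j)
    calc ∑ i, c i j ^ 2 = ∑ i, (dotProduct (u i) (w j)) ^ 2 := by
          exact Finset.sum_congr rfl fun i _ => by rw [hc]; simp only; rw [dotProduct_comm]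
      _ ≤ dotProduct (w j) (w j) := hbes
      _ = 1 := by rw [dw j j, if_pos rfl]
  have hrowd : ∀ i, ∑ j, d i j ^ 2 ≤ 1 := by
    intro i
    set v : Fin m → Fin n → ℝ := fun j => (sB j)⁻¹ • y j with hv
    have hvv : ∀ p q, dotProduct (v p) (v q) = if p = q then ((sB p)⁻¹ * sB p)^2 else 0 := by
      intro p q
      rw [hv]; simp only
      rw [smul_dotProduct, dotProduct_smul, dyy p q]
      by_cases h : p = q
      · subst h; simp only [if_pos rfl, eq_self_iff_true, if_true, smul_eq_mul, ← hsB_sq p]; ring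
      · simp [h]
    have he : ∀ p, ((sB p)⁻¹ * sB p)^2 ≤ 1 := by
      intro p; by_cases h : sB p = 0
      · simp [h]
      · rw [inv_mul_cancel₀ h]; norm_num
    have hbes := dot_bessel v _ he hvv ((sA i)⁻¹ • x i)
    have hxx : dotProduct ((sA i)⁻¹ • x i) ((sA i)⁻¹ • x i) = ((sA i)⁻¹ * sA i)^2 := by
      rw [smul_dotProduct, dotProduct_smul, dxx i i, if_pos rfl, ← hsA_sq i]
      simp only [smul_eq_mul]; ring
    have hdv : ∀ j, d i j = dotProduct (v j) ((sA i)⁻¹ • x i) := by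
      intro j
      rw [hd, hv]; simp only
      rw [smul_dotProduct, dotProduct_smul, hgdef]; simp only [smul_eq_mul]
      rw [mul_inv]
      ring
    calc ∑ j, d i j ^ 2 = ∑ j, (dotProduct (v j) ((sA i)⁻¹ • x i)) ^ 2 := by
          exact Finset.sum_congr rfl fun j _ => by rw [hdv j]
      _ ≤ dotProduct ((sA i)⁻¹ • x i) ((sA i)⁻¹ • x i) := hbes
      _ = ((sA i)⁻¹ * sA i)^2 := hxx
      _ ≤ 1 := by
          by_cases h : sA i = 0
          · simp [h]
          · rw [inv_mul_cancel₀ h]; norm_num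
  have hcold : ∀ j, ∑ i, d i j ^ 2 ≤ 1 := by
    intro j
    set v : Fin m → Fin n → ℝ := fun i => (sA i)⁻¹ • x i with hv
    have hvv : ∀ p q, dotProduct (v p) (v q) = if p = q then ((sA p)⁻¹ * sA p)^2 else 0 := by
      intro p q
      rw [hv]; simp only
      rw [smul_dotProduct, dotProduct_smul, dxx p q]
      by_cases h : p = q
      · subst h; simp only [if_pos rfl, eq_self_iff_true, if_true, smul_eq_mul, ← hsA_sq p]; ring
      · simp [h]
    have he : ∀ p, ((sA p)⁻¹ * sA p)^2 ≤ 1 := by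
      intro p; by_cases h : sA p = 0
      · simp [h]
      · rw [inv_mul_cancel₀ h]; norm_num
    have hbes := dot_bessel v _ he hvv ((sB j)⁻¹ • y j)
    have hyy2 : dotProduct ((sB j)⁻¹ • y j) ((sB j)⁻¹ • y j) = ((sB j)⁻¹ * sB j)^2 := by
      rw [smul_dotProduct, dotProduct_smul, dyy j j, if_pos rfl, ← hsB_sq j]
      simp only [smul_eq_mul]; ring
    have hdv : ∀ i, d i j = dotProduct (v i) ((sB j)⁻¹ • y j) := by
      intro i
      rw [hd, hv]; simp only
      rw [smul_dotProduct, dotProduct_smul, hgdef]; simp only [smul_eq_mul]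
      rw [mul_inv, dotProduct_comm]
      ring
    calc ∑ i, d i j ^ 2 = ∑ i, (dotProduct (v i) ((sB j)⁻¹ • y j)) ^ 2 := by
          exact Finset.sum_congr rfl fun i _ => by rw [hdv i]
      _ ≤ dotProduct ((sB j)⁻¹ • y j) ((sB j)⁻¹ • y j) := hbes
      _ = ((sB j)⁻¹ * sB j)^2 := hyy2
      _ ≤ 1 := by
          by_cases h : sB j = 0
          · simp [h]
          · rw [inv_mul_cancel₀ h]; norm_num
  have hErow : ∀ i, ∑ j, E i j ≤ 1 := by
    intro i
    have : ∑ j, E i j = ((∑ j, c i j ^ 2) + (∑ j, d i j ^ 2)) / 2 := by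
      rw [hE]; simp only
      rw [← Finset.sum_add_distrib, Finset.sum_div]
    rw [this]
    linarith [hrowc i, hrowd i]
  have hEcol : ∀ j, ∑ i, E i j ≤ 1 := by
    intro j
    have : ∑ i, E i j = ((∑ i, c i j ^ 2) + (∑ i, d i j ^ 2)) / 2 := by
      rw [hE]; simp only
      rw [← Finset.sum_add_distrib, Finset.sum_div]
    rw [this]
    linarith [hcolc j, hcold j]
  have step1 : Matrix.trace (Aᵀ * B) ≤ ∑ i, ∑ j, sA i * sB j * E i j := by
    rw [tr]
    refine Finset.sum_le_sum fun i _ => Finset.sum_le_sum fun j _ => ?_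
    rw [hg i j]
    have h1 : c i j * (sA i * sB j * d i j) = sA i * sB j * (c i j * d i j) := by ring
    rw [h1]
    refine mul_le_mul_of_nonneg_left ?_ (mul_nonneg (hsA_nn i) (hsB_nn j))
    rw [hE]; simp only
    nlinarith [sq_nonneg (c i j - d i j)]
  -- sorting permutations
  set π := Tuple.sort (fun j => - svUnsorted A j) with hπ
  set ρ := Tuple.sort (fun j => - svUnsorted B j) with hρ
  have hsvA : ∀ k, singularValues A k = sA (π k) := fun k => rfl
  have hsvB : ∀ l, singularValues B l = sB (ρ l) := fun l => rfl
  have hperm : ∑ i, ∑ j, sA i * sB j * E i j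
      = ∑ k, ∑ l, singularValues A k * singularValues B l * E (π k) (ρ l) := by
    rw [← Equiv.sum_comp π (fun i => ∑ j, sA i * sB j * E i j)]
    refine Finset.sum_congr rfl fun k _ => ?_
    rw [← Equiv.sum_comp ρ (fun j => sA (π k) * sB j * E (π k) j)]
    refine Finset.sum_congr rfl fun l _ => ?_
    rw [hsvA k, hsvB l]
  have hmonoA : ∀ (k l : Fin m), k ≤ l → singularValues A l ≤ singularValues A k := by
    intro k l hkl
    have h2 := Tuple.monotone_sort (fun j => - svUnsorted A j) hkl
    simp only [Function.comp_apply] at h2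
    have : - sA (π k) ≤ - sA (π l) := h2
    rw [hsvA k, hsvA l]; linarith
  have hmonoB : ∀ (k l : Fin m), k ≤ l → singularValues B l ≤ singularValues B k := by
    intro k l hkl
    have h2 := Tuple.monotone_sort (fun j => - svUnsorted B j) hkl
    simp only [Function.comp_apply] at h2
    have : - sB (ρ k) ≤ - sB (ρ l) := h2
    rw [hsvB k, hsvB l]; linarith
  have hsvA_nn : ∀ k, 0 ≤ singularValues A k := fun k => Real.sqrt_nonneg _
  have hsvB_nn : ∀ k, 0 ≤ singularValues B k := fun k => Real.sqrt_nonneg _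
  -- lift to ℕ
  set a : ℕ → ℝ := fun t => if h : t < m then singularValues A ⟨t, h⟩ else 0 with ha
  set b : ℕ → ℝ := fun t => if h : t < m then singularValues B ⟨t, h⟩ else 0 with hb
  set F : ℕ → ℕ → ℝ := fun s t =>
    if h : s < m ∧ t < m then E (π ⟨s, h.1⟩) (ρ ⟨t, h.2⟩) else 0 with hF
  have haA : ∀ k, a (k+1) ≤ a k := by
    intro k
    rw [ha]; simp only
    by_cases h1 : k + 1 < m
    · have h0 : k < m := by omega
      rw [dif_pos h1, dif_pos h0]
      exact hmonoA ⟨k, h0⟩ ⟨k+1, h1⟩ (by simp [Fin.le_def])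
    · rw [dif_neg h1]
      by_cases h0 : k < m
      · rw [dif_pos h0]; exact hsvA_nn _
      · rw [dif_neg h0]
  have hbB : ∀ k, b (k+1) ≤ b k := by
    intro k
    rw [hb]; simp only
    by_cases h1 : k + 1 < m
    · have h0 : k < m := by omega
      rw [dif_pos h1, dif_pos h0]
      exact hmonoB ⟨k, h0⟩ ⟨k+1, h1⟩ (by simp [Fin.le_def])
    · rw [dif_neg h1]
      by_cases h0 : k < m
      · rw [dif_pos h0]; exact hsvB_nn _
      · rw [dif_neg h0]
  have ha0 : a m = 0 := by rw [ha]; simp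
  have hb0 : b m = 0 := by rw [hb]; simp
  have hF0 : ∀ s t, 0 ≤ F s t := by
    intro s t
    rw [hF]; simp only
    by_cases h : s < m ∧ t < m
    · rw [dif_pos h]; exact hE0 _ _
    · rw [dif_neg h]
  have hFrow : ∀ s, s < m → ∑ t ∈ range m, F s t ≤ 1 := by
    intro s hs
    have heq : ∑ t ∈ range m, F s t = ∑ l : Fin m, E (π ⟨s, hs⟩) (ρ l) := by
      rw [← Fin.sum_univ_eq_sum_range (fun t => F s t) m]
      refine Finset.sum_congr rfl fun l _ => ?_
      rw [hF]; simp only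
      rw [dif_pos ⟨hs, l.isLt⟩]
    rw [heq, Equiv.sum_comp ρ (fun j => E (π ⟨s, hs⟩) j)]
    exact hErow _
  have hFcol : ∀ t, t < m → ∑ s ∈ range m, F s t ≤ 1 := by
    intro t ht
    have heq : ∑ s ∈ range m, F s t = ∑ k : Fin m, E (π k) (ρ ⟨t, ht⟩) := by
      rw [← Fin.sum_univ_eq_sum_range (fun s => F s t) m]
      refine Finset.sum_congr rfl fun k _ => ?_
      rw [hF]; simp only
      rw [dif_pos ⟨k.isLt, ht⟩]
    rw [heq, Equiv.sum_comp π (fun i => E i (ρ ⟨t, ht⟩))]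
    exact hEcol _
  have lhs_eq : ∑ k : Fin m, ∑ l : Fin m, singularValues A k * singularValues B l * E (π k) (ρ l)
      = ∑ s ∈ range m, ∑ t ∈ range m, a s * b t * F s t := by
    rw [← Fin.sum_univ_eq_sum_range (fun s => ∑ t ∈ range m, a s * b t * F s t) m]
    refine Finset.sum_congr rfl fun k _ => ?_
    rw [← Fin.sum_univ_eq_sum_range (fun t => a (k : ℕ) * b t * F (k : ℕ) t) m]
    refine Finset.sum_congr rfl fun l _ => ?_
    rw [ha, hb, hF]; simp only
    rw [dif_pos k.isLt, dif_pos l.isLt, dif_pos ⟨k.isLt, l.isLt⟩]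
  have rhs_eq : ∑ i : Fin m, singularValues A i * singularValues B i
      = ∑ t ∈ range m, a t * b t := by
    rw [← Fin.sum_univ_eq_sum_range (fun t => a t * b t) m]
    refine Finset.sum_congr rfl fun i _ => ?_
    rw [ha, hb]; simp only
    rw [dif_pos i.isLt, dif_pos i.isLt]
  have final := abel_rearrange m a b F haA ha0 hbB hb0 hF0 hFrow hFcol
  calc Matrix.trace (Aᵀ * B) ≤ ∑ i, ∑ j, sA i * sB j * E i j := step1
    _ = ∑ k, ∑ l, singularValues A k * singularValues B l * E (π k) (ρ l) := hperm
    _ = ∑ s ∈ range m, ∑ t ∈ range m, a s * b t * F s t := lhs_eq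
    _ ≤ ∑ t ∈ range m, a t * b t := final
    _ = ∑ i : Fin m, singularValues A i * singularValues B i := rhs_eq.symm
end

section
/- Let g : [0,∞) → [0,∞) with g(0) = 0 be concave, nondecreasing and differentiable with convex derivative. For b ≥ 0, suppose x̂ = max{ x ∈ [0, b] : g'(x) + x - b = 0 } exists. Then x* = argmin over {0, x̂} of f_b, where f_b(x) = g(x) + (1/2)(x - b)², is a global minimizer of f_b on [0, ∞). -/
open Set

/-- Comparing `f_b` at `0` and at the largest stationary point `x̂` in `[0,b]`
yields a global minimizer of `f_b` on `[0,∞)`. -/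
theorem prox_global_min_from_zero_or_largest_stationary (g g' : ℝ → ℝ)
    (hg_nonneg : ∀ x ∈ Ici (0:ℝ), 0 ≤ g x) (hg0 : g 0 = 0)
    (hconc : ConcaveOn ℝ (Ici 0) g) (hmono : MonotoneOn g (Ici 0))
    (hderiv : ∀ x ∈ Ici (0:ℝ), HasDerivWithinAt g (g' x) (Ici 0) x)
    (hg'conv : ConvexOn ℝ (Ici 0) g')
    (b : ℝ) (hb : 0 ≤ b) (xhat : ℝ)
    (hxhat_mem : xhat ∈ Icc 0 b) (hxhat_stat : g' xhat + xhat - b = 0)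
    (hxhat_max : ∀ x ∈ Icc (0:ℝ) b, g' x + x - b = 0 → x ≤ xhat)
    (xstar : ℝ) (hxstar_mem : xstar ∈ ({0, xhat} : Set ℝ))
    (hxstar_min : ∀ y ∈ ({0, xhat} : Set ℝ),
      g xstar + (1/2) * (xstar - b)^2 ≤ g y + (1/2) * (y - b)^2) :
    IsMinOn (fun t => g t + (1/2) * (t - b)^2) (Ici 0) xstar := by
  set f : ℝ → ℝ := fun t => g t + (1/2) * (t - b)^2 with hf_def
  set φ : ℝ → ℝ := fun x => g' x + x - b with hφ_def
  have hxhat0 : (0:ℝ) ≤ xhat := hxhat_mem.1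
  -- derivative of f within any subset of Ici 0
  have hfd : ∀ (s : Set ℝ), s ⊆ Ici 0 → ∀ x ∈ s, HasDerivWithinAt f (φ x) s x := by
    intro s hs x hx
    have h1 : HasDerivWithinAt g (g' x) s x := (hderiv x (hs hx)).mono hs
    have h2 : HasDerivWithinAt (fun t => (1/2:ℝ) * (t - b)^2) (x - b) s x := by
      have := (((hasDerivWithinAt_id x s).sub_const b).pow 2).const_mul (1/2:ℝ)
      refine this.congr_deriv ?_
      simp [id]
    have := h1.add h2
    refine this.congr_deriv ?_
    simp [hφ_def]
    ring
  have hfcont : ContinuousOn f (Ici 0) := fun x hx =>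
    (hfd _ (subset_refl _) x hx).continuousWithinAt
  -- g' is nonnegative on Ici 0
  have hg'0 : ∀ x ∈ Ici (0:ℝ), 0 ≤ g' x := by
    intro x hx
    have hsub : Ioi x ⊆ Ici (0:ℝ) := fun y hy => mem_Ici.mpr (le_trans hx (le_of_lt hy))
    have h := (hderiv x hx).mono hsub
    rw [hasDerivWithinAt_iff_tendsto_slope] at h
    have hset : Ioi x \ {x} = Ioi x := by simp
    rw [hset] at h
    refine ge_of_tendsto h ?_
    filter_upwards [self_mem_nhdsWithin] with y hy
    rw [slope_def_field]
    have hxy : x ≤ y := le_of_lt hy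
    have : g x ≤ g y := hmono hx (le_trans hx hxy) hxy
    exact div_nonneg (by linarith) (by linarith [(mem_Ioi.mp hy).le]; )
  -- φ is convex on Ici 0
  have hφconv : ConvexOn ℝ (Ici 0) φ := by
    refine ⟨convex_Ici 0, fun x hx y hy a a' ha ha' hab => ?_⟩
    have h := hg'conv.2 hx hy ha ha' hab
    simp only [smul_eq_mul, hφ_def] at *
    have hb' : a * b + a' * b = b := by rw [← add_mul, hab, one_mul]
    linarith
  -- φ is continuous on Ioi 0
  have hφcont : ContinuousOn φ (Ioi 0) := by
    have hg'cont : ContinuousOn g' (Ioi 0) :=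
      (hg'conv.subset Ioi_subset_Ici_self (convex_Ioi 0)).continuousOn isOpen_Ioi
    exact (hg'cont.add continuousOn_id).sub continuousOn_const
  -- φ is nonnegative on [xhat, ∞)
  have hφge : ∀ x, xhat ≤ x → 0 ≤ φ x := by
    intro x hx
    rcases eq_or_lt_of_le hx with rfl | hlt
    · simp [hφ_def, hxhat_stat]
    rcases le_or_gt b x with hbx | hxb
    · have : 0 ≤ g' x := hg'0 x (le_trans hb hbx)
      simp only [hφ_def]; linarith
    · by_contra hneg
      push_neg at hneg
      have hx0 : 0 < x := lt_of_le_of_lt hxhat0 hlt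
      have hsub : Icc x b ⊆ Ioi (0:ℝ) := fun y hy => lt_of_lt_of_le hx0 hy.1
      have hφb : 0 ≤ φ b := by
        have := hg'0 b hb
        simp only [hφ_def]; linarith
      have hivt := intermediate_value_Icc hxb.le (hφcont.mono hsub)
      have h0mem : (0:ℝ) ∈ Icc (φ x) (φ b) := ⟨hneg.le, hφb⟩
      obtain ⟨z, hz, hz0⟩ := hivt h0mem
      have hzxhat : z ≤ xhat := hxhat_max z ⟨le_trans hx0.le hz.1, hz.2⟩ hz0
      linarith [hz.1]
  -- f is monotone on [xhat, ∞)
  have hfmono : MonotoneOn f (Ici xhat) := by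
    have hIci : Ici xhat ⊆ Ici (0:ℝ) := Ici_subset_Ici.mpr hxhat0
    refine monotoneOn_of_hasDerivWithinAt_nonneg (f' := φ) (convex_Ici xhat)
      (hfcont.mono hIci) (fun x hx => ?_) (fun x hx => ?_)
    · rw [interior_Ici] at hx ⊢
      exact hfd _ (fun y hy => le_trans hxhat0 (le_of_lt hy)) x hx
    · rw [interior_Ici] at hx
      exact hφge x hx.le
  have hfs0 : f xstar ≤ f 0 := hxstar_min 0 (by simp)
  have hfsx : f xstar ≤ f xhat := hxstar_min xhat (by simp)
  intro t ht
  simp only [mem_Ici] at ht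
  show f xstar ≤ f t
  rcases le_or_gt xhat t with htx | htx
  · exact le_trans hfsx (hfmono (self_mem_Ici) htx htx)
  · by_cases hneg : ∃ s ∈ Icc (0:ℝ) t, φ s < 0
    · obtain ⟨s, hs, hsneg⟩ := hneg
      -- φ ≤ 0 on (t, xhat), so f is antitone on [t, xhat]
      have hφle : ∀ r ∈ Ioo t xhat, φ r ≤ 0 := by
        intro r hr
        have hsx : s ≤ xhat := le_trans hs.2 htx.le
        have hrseg : r ∈ segment ℝ s xhat := by
          rw [segment_eq_Icc hsx]
          exact ⟨le_trans hs.2 hr.1.le, hr.2.le⟩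
        have := hφconv.le_on_segment hs.1 (mem_Ici.mpr hxhat0) hrseg
        have hφxh : φ xhat = 0 := hxhat_stat
        rw [hφxh, max_eq_right hsneg.le] at this
        exact this
      have hanti : AntitoneOn f (Icc t xhat) := by
        have hsub : Icc t xhat ⊆ Ici (0:ℝ) := fun y hy => le_trans ht hy.1
        refine antitoneOn_of_hasDerivWithinAt_nonpos (f' := φ) (convex_Icc t xhat)
          (hfcont.mono hsub) (fun x hx => ?_) (fun x hx => ?_)
        · rw [interior_Icc] at hx ⊢
          exact hfd _ (fun y hy => le_trans ht hy.1.le) x hx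
        · rw [interior_Icc] at hx
          exact hφle x hx
      exact le_trans hfsx (hanti ⟨le_refl t, htx.le⟩ ⟨htx.le, le_refl xhat⟩ htx.le)
    · push_neg at hneg
      have hmono0 : MonotoneOn f (Icc 0 t) := by
        have hsub : Icc (0:ℝ) t ⊆ Ici (0:ℝ) := fun y hy => hy.1
        refine monotoneOn_of_hasDerivWithinAt_nonneg (f' := φ) (convex_Icc 0 t)
          (hfcont.mono hsub) (fun x hx => ?_) (fun x hx => ?_)
        · rw [interior_Icc] at hx ⊢
          exact hfd _ (fun y hy => hy.1.le) x hx
        · rw [interior_Icc] at hx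
          exact hneg x ⟨hx.1.le, hx.2.le⟩
      exact le_trans hfs0 (hmono0 ⟨le_refl 0, ht⟩ ⟨ht, le_refl t⟩ ht)
end

section
/- Let g : [0,∞) → [0,∞) with g(0) = 0 be such that x ↦ Prox_g(x) admits a monotone selection, and let B ∈ ℝ^{m×n} (m ≤ n) with SVD B = U Diag(σ(B)) Vᵀ. Then X* = U Diag(ϱ*) Vᵀ, where ϱᵢ* ∈ Prox_g(σᵢ(B)) is chosen nonincreasing, is a global minimizer of X ↦ ∑_{i=1}^m g(σᵢ(X)) + (1/2)‖X - B‖_F². -/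
open Set Matrix

/-- The `m × n` rectangular diagonal matrix with diagonal entries `d`. -/
def rectDiag {m n : ℕ} (d : Fin m → ℝ) : Matrix (Fin m) (Fin n) ℝ :=
  Matrix.of fun i j => if (i : ℕ) = (j : ℕ) then d i else 0

/-- The squared Frobenius norm. -/
def frobSq {m n : ℕ} (X : Matrix (Fin m) (Fin n) ℝ) : ℝ :=
  ∑ i, ∑ j, (X i j)^2

lemma sv_nonneg {m n : ℕ} (A : Matrix (Fin m) (Fin n) ℝ) (i : Fin m) :
    0 ≤ singularValues A i := Real.sqrt_nonneg _

lemma sv_antitone {m n : ℕ} (A : Matrix (Fin m) (Fin n) ℝ) :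
    Antitone (singularValues A) := by
  have h := Tuple.monotone_sort (fun j => - svUnsorted A j)
  intro i j hij
  have := h hij
  simpa [singularValues] using this

lemma antitone_eq_of_multiset_eq {m : ℕ} {f g : Fin m → ℝ}
    (hf : Antitone f) (hg : Antitone g)
    (h : Multiset.map f Finset.univ.val = Multiset.map g Finset.univ.val) : f = g := by
  have hperm : List.Perm (List.ofFn f) (List.ofFn g) := by
    rw [List.ofFn_eq_map, List.ofFn_eq_map]
    have : Finset.univ.val = (↑(List.finRange m) : Multiset (Fin m)) := rfl
    rw [this] at h
    rw [← Multiset.coe_eq_coe, ← Multiset.map_coe, ← Multiset.map_coe]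
    exact h
  have hsf : (List.ofFn f).Pairwise (· ≥ ·) := by
    rw [List.pairwise_ofFn]
    exact fun i j hij => hf hij.le
  have hsg : (List.ofFn g).Pairwise (· ≥ ·) := by
    rw [List.pairwise_ofFn]
    exact fun i j hij => hg hij.le
  have heq := List.Perm.eq_of_pairwise (fun a b _ _ h1 h2 => le_antisymm h2 h1) hsf hsg hperm
  exact List.ofFn_injective heq

lemma sv_multiset {m n : ℕ} (A : Matrix (Fin m) (Fin n) ℝ) :
    Multiset.map (singularValues A) Finset.univ.val
      = Multiset.map (svUnsorted A) Finset.univ.val := by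
  have : singularValues A = svUnsorted A ∘ (Tuple.sort (fun j => - svUnsorted A j)) := rfl
  rw [this, ← Multiset.map_map]
  congr 1
  have := Finset.map_univ_equiv (Tuple.sort (fun j => - svUnsorted A j))
  calc Multiset.map (⇑(Tuple.sort fun j => -svUnsorted A j)) Finset.univ.val
      = (Finset.map (Tuple.sort (fun j => - svUnsorted A j)).toEmbedding Finset.univ).val := rfl
    _ = Finset.univ.val := by rw [this]

lemma frobSq_eq_trace {m n : ℕ} (X : Matrix (Fin m) (Fin n) ℝ) :
    frobSq X = Matrix.trace (X * Xᵀ) := by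
  simp [frobSq, Matrix.trace, Matrix.mul_apply, Matrix.diag, pow_two]

lemma trace_eq_sum_eigs {k : ℕ} (A : Matrix (Fin k) (Fin k) ℝ) (hA : A.IsHermitian) :
    Matrix.trace A = ∑ i, hA.eigenvalues i := by
  conv_lhs => rw [hA.spectral_theorem, Unitary.conjStarAlgAut_apply]
  rw [Matrix.trace_mul_cycle]
  have h1 : star (hA.eigenvectorUnitary : Matrix (Fin k) (Fin k) ℝ)
      * (hA.eigenvectorUnitary : Matrix (Fin k) (Fin k) ℝ) = 1 :=
    Matrix.mem_unitaryGroup_iff'.mp hA.eigenvectorUnitary.2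
  rw [h1, one_mul, Matrix.trace_diagonal]
  simp [RCLike.ofReal_real_eq_id]

lemma frobSq_unitary {m n : ℕ} (U : Matrix (Fin m) (Fin m) ℝ) (V : Matrix (Fin n) (Fin n) ℝ)
    (hU : Uᵀ * U = 1) (hV : Vᵀ * V = 1) (A : Matrix (Fin m) (Fin n) ℝ) :
    frobSq (U * A * Vᵀ) = frobSq A := by
  have hV' : V * Vᵀ = 1 := mul_eq_one_comm.mp hV
  have hU' : U * Uᵀ = 1 := mul_eq_one_comm.mp hU
  rw [frobSq_eq_trace, frobSq_eq_trace, Matrix.transpose_mul, Matrix.transpose_mul,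
    Matrix.transpose_transpose]
  have : U * A * Vᵀ * (V * (Aᵀ * Uᵀ)) = U * (A * Aᵀ * Uᵀ) := by
    simp only [Matrix.mul_assoc, ← Matrix.mul_assoc Vᵀ V, hV, Matrix.one_mul]
  rw [this, ← Matrix.trace_mul_comm]
  simp only [Matrix.mul_assoc]
  rw [hU, Matrix.mul_one]

lemma frobSq_rectDiag {m n : ℕ} (hmn : m ≤ n) (d : Fin m → ℝ) :
    frobSq (rectDiag d : Matrix (Fin m) (Fin n) ℝ) = ∑ i, d i ^ 2 := by
  unfold frobSq rectDiag
  apply Finset.sum_congr rfl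
  intro i _
  have : ∀ j : Fin n, ((i : ℕ) = (j : ℕ)) ↔ (j = Fin.castLE hmn i) := by
    intro j
    constructor
    · intro h; exact Fin.ext h.symm
    · intro h; rw [h]; rfl
  simp only [Matrix.of_apply]
  calc ∑ j : Fin n, (if (i : ℕ) = (j : ℕ) then d i else 0)^2
      = ∑ j, if j = Fin.castLE hmn i then d i ^ 2 else 0 := by
        apply Finset.sum_congr rfl; intro j _
        by_cases h : (i : ℕ) = (j : ℕ)
        · rw [if_pos h, if_pos ((this j).mp h)]
        · rw [if_neg h, if_neg (fun hc => h ((this j).mpr hc))]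
          ring
    _ = d i ^ 2 := by rw [Finset.sum_ite_eq' Finset.univ (Fin.castLE hmn i)]; simp

lemma rectDiag_sub {m n : ℕ} (d e : Fin m → ℝ) :
    (rectDiag d : Matrix (Fin m) (Fin n) ℝ) - rectDiag e = rectDiag (d - e) := by
  funext i j
  simp only [rectDiag, Matrix.sub_apply, Matrix.of_apply, Pi.sub_apply]
  split <;> simp

lemma frobSq_eq_sum_sv {m n : ℕ} (X : Matrix (Fin m) (Fin n) ℝ) :
    frobSq X = ∑ i, (singularValues X i)^2 := by
  have hH := Matrix.isHermitian_mul_conjTranspose_self X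
  have h1 : frobSq X = ∑ i, hH.eigenvalues i := by
    rw [frobSq_eq_trace, ← Matrix.conjTranspose_eq_transpose_of_trivial,
      trace_eq_sum_eigs _ hH]
  have h2 : ∀ i, hH.eigenvalues i = (svUnsorted X i)^2 := by
    intro i
    rw [svUnsorted, Real.sq_sqrt ((Matrix.posSemidef_self_mul_conjTranspose X).eigenvalues_nonneg i)]
  have h3 : ∑ i, (singularValues X i)^2 = ∑ i, (svUnsorted X i)^2 := by
    rw [← Equiv.sum_comp (Tuple.sort (fun j => - svUnsorted X j)) (fun i => (svUnsorted X i)^2)]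
    rfl
  rw [h1, h3]
  exact Finset.sum_congr rfl fun i _ => h2 i

private lemma tele_sum (A : ℕ → ℝ) (m i : ℕ) (him : i < m) (hAm : A m = 0) :
    ∑ k ∈ Finset.range m, (if i ≤ k then A k - A (k+1) else 0) = A i := by
  rw [← Finset.sum_filter]
  have hf : (Finset.range m).filter (fun k => i ≤ k) = Finset.Ico i m := by
    ext k; simp [Finset.mem_Ico]; omega
  rw [hf, Finset.sum_Ico_eq_sum_range]
  have h := Finset.sum_range_sub' (fun t => A (i + t)) (m - i)
  simp only [Nat.add_zero] at h
  calc ∑ k ∈ Finset.range (m - i), (A (i + k) - A (i + k + 1))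
      = A i - A (i + (m - i)) := h
    _ = A i := by rw [Nat.add_sub_cancel' him.le, hAm, sub_zero]

private lemma key_rearrange {m : ℕ} (a b : Fin m → ℝ) (M : Fin m → Fin m → ℝ)
    (ha : Antitone a) (ha0 : ∀ i, 0 ≤ a i) (hb : Antitone b) (hb0 : ∀ i, 0 ≤ b i)
    (hM0 : ∀ i l, 0 ≤ M i l)
    (hrow : ∀ i, ∑ l, M i l ≤ 1) (hcol : ∀ l, ∑ i, M i l ≤ 1) :
    ∑ i, ∑ l, a i * b l * M i l ≤ ∑ i, a i * b i := by
  classical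
  set A : ℕ → ℝ := fun k => if h : k < m then a ⟨k, h⟩ else 0 with hA
  set Bf : ℕ → ℝ := fun k => if h : k < m then b ⟨k, h⟩ else 0 with hB
  -- indicator
  set ind : ℕ → ℕ → ℝ := fun i k => if i ≤ k then 1 else 0 with hind
  set δ : ℕ → ℝ := fun k => A k - A (k+1) with hδ
  set ε : ℕ → ℝ := fun k => Bf k - Bf (k+1) with hε
  have hAm : A m = 0 := by simp [hA]
  have hBm : Bf m = 0 := by simp [hB]
  have hδ0 : ∀ k, 0 ≤ δ k := by
    intro k
    simp only [hδ, hA, sub_nonneg]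
    by_cases h : k < m
    · by_cases h' : k + 1 < m
      · rw [dif_pos h, dif_pos h']
        exact ha (by simp [Fin.le_def])
      · rw [dif_pos h, dif_neg h']
        exact ha0 _
    · rw [dif_neg h, dif_neg (by omega)]
  have hε0 : ∀ k, 0 ≤ ε k := by
    intro k
    simp only [hε, hB, sub_nonneg]
    by_cases h : k < m
    · by_cases h' : k + 1 < m
      · rw [dif_pos h, dif_pos h']
        exact hb (by simp [Fin.le_def])
      · rw [dif_pos h, dif_neg h']
        exact hb0 _
    · rw [dif_neg h, dif_neg (by omega)]
  have keyA : ∀ i : Fin m, a i = ∑ k ∈ Finset.range m, ind i k * δ k := by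
    intro i
    have h := tele_sum A m i i.isLt hAm
    have : a i = A (i : ℕ) := by simp [hA, i.isLt]
    rw [this, ← h]
    apply Finset.sum_congr rfl
    intro k _
    simp only [hind, hδ]
    split <;> ring
  have keyB : ∀ i : Fin m, b i = ∑ k ∈ Finset.range m, ind i k * ε k := by
    intro i
    have h := tele_sum Bf m i i.isLt hBm
    have : b i = Bf (i : ℕ) := by simp [hB, i.isLt]
    rw [this, ← h]
    apply Finset.sum_congr rfl
    intro k _
    simp only [hind, hε]
    split <;> ring
  -- the square grid
  set Q := Finset.range m ×ˢ Finset.range m with hQ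
  set P : Finset (Fin m × Fin m) := Finset.univ ×ˢ Finset.univ with hP
  -- counting functions
  set S : ℕ × ℕ → ℝ := fun q => ∑ i : Fin m, ∑ l : Fin m, ind i q.1 * ind l q.2 * M i l with hS
  set cnt : ℕ × ℕ → ℝ := fun q => ∑ i : Fin m, ind i q.1 * ind i q.2 with hcnt
  have expandL : ∑ i, ∑ l, a i * b l * M i l = ∑ q ∈ Q, δ q.1 * ε q.2 * S q := by
    have h1 : ∀ i l : Fin m, a i * b l * M i l
        = ∑ q ∈ Q, ind i q.1 * ind l q.2 * M i l * (δ q.1 * ε q.2) := by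
      intro i l
      rw [keyA i, keyB l, Finset.sum_mul_sum, hQ, Finset.sum_product, Finset.sum_mul]
      apply Finset.sum_congr rfl; intro k _
      rw [Finset.sum_mul]
      apply Finset.sum_congr rfl; intro r _
      ring
    calc ∑ i, ∑ l, a i * b l * M i l
        = ∑ p ∈ P, ∑ q ∈ Q, ind p.1 q.1 * ind p.2 q.2 * M p.1 p.2 * (δ q.1 * ε q.2) := by
          rw [hP, Finset.sum_product]
          exact Finset.sum_congr rfl fun i _ => Finset.sum_congr rfl fun l _ => h1 i l
      _ = ∑ q ∈ Q, ∑ p ∈ P, ind p.1 q.1 * ind p.2 q.2 * M p.1 p.2 * (δ q.1 * ε q.2) :=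
          Finset.sum_comm
      _ = ∑ q ∈ Q, δ q.1 * ε q.2 * S q := by
          apply Finset.sum_congr rfl; intro q _
          rw [hS, hP, Finset.sum_product, Finset.mul_sum]
          apply Finset.sum_congr rfl; intro i _
          rw [Finset.mul_sum]
          apply Finset.sum_congr rfl; intro l _
          ring
  have expandR : ∑ i, a i * b i = ∑ q ∈ Q, δ q.1 * ε q.2 * cnt q := by
    have h1 : ∀ i : Fin m, a i * b i
        = ∑ q ∈ Q, ind i q.1 * ind i q.2 * (δ q.1 * ε q.2) := by
      intro i
      rw [keyA i, keyB i, Finset.sum_mul_sum, hQ, Finset.sum_product]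
      apply Finset.sum_congr rfl; intro k _
      apply Finset.sum_congr rfl; intro r _
      ring
    calc ∑ i, a i * b i
        = ∑ i : Fin m, ∑ q ∈ Q, ind i q.1 * ind i q.2 * (δ q.1 * ε q.2) :=
          Finset.sum_congr rfl fun i _ => h1 i
      _ = ∑ q ∈ Q, ∑ i : Fin m, ind i q.1 * ind i q.2 * (δ q.1 * ε q.2) :=
          Finset.sum_comm
      _ = ∑ q ∈ Q, δ q.1 * ε q.2 * cnt q := by
          apply Finset.sum_congr rfl; intro q _
          simp only [hcnt, Finset.mul_sum]
          apply Finset.sum_congr rfl; intro i _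
          ring
  rw [expandL, expandR]
  apply Finset.sum_le_sum
  intro q _
  have hSle : S q ≤ cnt q := by
    have hind0 : ∀ i k, (0:ℝ) ≤ ind i k := by intro i k; simp only [hind]; split <;> norm_num
    have hind1 : ∀ i k, ind i k ≤ 1 := by intro i k; simp only [hind]; split <;> norm_num
    rcases le_total q.1 q.2 with hc | hc
    · -- q.1 ≤ q.2 : bound rows
      have : S q ≤ ∑ i : Fin m, ind i q.1 := by
        simp only [hS]
        apply Finset.sum_le_sum
        intro i _
        calc ∑ l : Fin m, ind i q.1 * ind l q.2 * M i l
            ≤ ∑ l : Fin m, ind i q.1 * M i l := by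
              apply Finset.sum_le_sum; intro l _
              have h1 : ind (l:ℕ) q.2 * M i l ≤ M i l :=
                mul_le_of_le_one_left (hM0 i l) (hind1 l q.2)
              calc ind (i:ℕ) q.1 * ind (l:ℕ) q.2 * M i l
                  = ind (i:ℕ) q.1 * (ind (l:ℕ) q.2 * M i l) := by ring
                _ ≤ ind (i:ℕ) q.1 * M i l :=
                  mul_le_mul_of_nonneg_left h1 (hind0 i q.1)
          _ = ind i q.1 * ∑ l, M i l := by rw [Finset.mul_sum]
          _ ≤ ind i q.1 * 1 := by
              apply mul_le_mul_of_nonneg_left (hrow i) (hind0 i q.1)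
          _ = ind i q.1 := mul_one _
      refine this.trans_eq ?_
      simp only [hcnt]
      apply Finset.sum_congr rfl
      intro i _
      by_cases h : (i:ℕ) ≤ q.1
      · simp [hind, h, h.trans hc]
      · simp [hind, h]
    · -- q.2 ≤ q.1 : bound columns
      have : S q ≤ ∑ l : Fin m, ind l q.2 := by
        simp only [hS]
        rw [Finset.sum_comm]
        apply Finset.sum_le_sum
        intro l _
        calc ∑ i : Fin m, ind i q.1 * ind l q.2 * M i l
            ≤ ∑ i : Fin m, ind l q.2 * M i l := by
              apply Finset.sum_le_sum; intro i _
              have h1 : ind (i:ℕ) q.1 * M i l ≤ M i l :=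
                mul_le_of_le_one_left (hM0 i l) (hind1 i q.1)
              calc ind (i:ℕ) q.1 * ind (l:ℕ) q.2 * M i l
                  = ind (l:ℕ) q.2 * (ind (i:ℕ) q.1 * M i l) := by ring
                _ ≤ ind (l:ℕ) q.2 * M i l :=
                  mul_le_mul_of_nonneg_left h1 (hind0 l q.2)
          _ = ind l q.2 * ∑ i, M i l := by rw [Finset.mul_sum]
          _ ≤ ind l q.2 * 1 := by
              apply mul_le_mul_of_nonneg_left (hcol l) (hind0 l q.2)
          _ = ind l q.2 := mul_one _
      refine this.trans_eq ?_
      simp only [hcnt]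
      apply Finset.sum_congr rfl
      intro i _
      by_cases h : (i:ℕ) ≤ q.2
      · simp [hind, h, h.trans hc]
      · simp [hind, h]
  have : 0 ≤ δ q.1 * ε q.2 := mul_nonneg (hδ0 _) (hε0 _)
  exact mul_le_mul_of_nonneg_left hSle this

private lemma conj_diag_apply {m : ℕ} (W : Matrix (Fin m) (Fin m) ℝ) (d : Fin m → ℝ)
    (i j : Fin m) : (W * Matrix.diagonal d * Wᵀ) i j = ∑ k, W i k * d k * W j k := by
  rw [Matrix.mul_apply]
  apply Finset.sum_congr rfl
  intro k _
  rw [Matrix.mul_diagonal, Matrix.transpose_apply]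

/-- decomposition of `X` adapted to its sorted singular values -/
private lemma exists_P_Y {m n : ℕ} (X : Matrix (Fin m) (Fin n) ℝ) :
    ∃ (P : Matrix (Fin m) (Fin m) ℝ) (Y : Matrix (Fin m) (Fin n) ℝ),
      Pᵀ * P = 1 ∧ P * Pᵀ = 1 ∧ X = P * Y ∧
      Y * Yᵀ = Matrix.diagonal (fun k => (singularValues X k)^2) := by
  classical
  have hH := Matrix.isHermitian_mul_conjTranspose_self X
  set eig := hH.eigenvalues with heig
  set P0 : Matrix (Fin m) (Fin m) ℝ := (hH.eigenvectorUnitary : Matrix (Fin m) (Fin m) ℝ)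
    with hP0
  have hspec : X * Xᵀ = P0 * Matrix.diagonal eig * P0ᵀ := by
    have h := hH.spectral_theorem
    rw [← Matrix.conjTranspose_eq_transpose_of_trivial X,
      ← Matrix.conjTranspose_eq_transpose_of_trivial P0, ← Matrix.star_eq_conjTranspose]
    rw [Unitary.conjStarAlgAut_apply] at h
    exact h
  have hP0unit : P0ᵀ * P0 = 1 := by
    have h := Matrix.mem_unitaryGroup_iff'.mp hH.eigenvectorUnitary.2
    rw [Matrix.star_eq_conjTranspose, Matrix.conjTranspose_eq_transpose_of_trivial] at h
    exact h
  -- sorted permutation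
  set π := Tuple.sort (fun j => - svUnsorted X j) with hπ
  have heignn : ∀ i, 0 ≤ eig i :=
    fun i => (Matrix.posSemidef_self_mul_conjTranspose X).eigenvalues_nonneg i
  have ha2 : ∀ k, eig (π k) = (singularValues X k)^2 := by
    intro k
    rw [singularValues, svUnsorted, Real.sq_sqrt (heignn (π k))]
  set P : Matrix (Fin m) (Fin m) ℝ := P0.submatrix id π with hP
  have hPtP : Pᵀ * P = 1 := by
    funext k l
    rw [Matrix.mul_apply]
    have : ∀ i, Pᵀ k i * P i l = P0ᵀ (π k) i * P0 i (π l) := by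
      intro i; simp [hP, Matrix.transpose_apply]
    rw [Finset.sum_congr rfl fun i _ => this i, ← Matrix.mul_apply, hP0unit]
    by_cases h : k = l
    · subst h; simp
    · have : π k ≠ π l := fun hc => h (π.injective hc)
      simp [Matrix.one_apply, h, this]
  have hPPt : P * Pᵀ = 1 := mul_eq_one_comm.mp hPtP
  refine ⟨P, Pᵀ * X, hPtP, hPPt, by rw [← Matrix.mul_assoc, hPPt, Matrix.one_mul], ?_⟩
  have hconj : X * Xᵀ = P * Matrix.diagonal (fun k => (singularValues X k)^2) * Pᵀ := by
    rw [hspec]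
    funext i j
    rw [conj_diag_apply, conj_diag_apply]
    rw [← Equiv.sum_comp π (fun k => P0 i k * eig k * P0 j k)]
    apply Finset.sum_congr rfl
    intro k _
    simp [hP, ha2 k]
  rw [Matrix.transpose_mul, Matrix.transpose_transpose, ← Matrix.mul_assoc,
    Matrix.mul_assoc (Pᵀ) X Xᵀ, hconj]
  calc Pᵀ * (P * Matrix.diagonal (fun k => (singularValues X k)^2) * Pᵀ) * P
      = (Pᵀ * P) * Matrix.diagonal (fun k => (singularValues X k)^2) * (Pᵀ * P) := by
        simp only [Matrix.mul_assoc]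
    _ = Matrix.diagonal (fun k => (singularValues X k)^2) := by
        rw [hPtP, Matrix.one_mul, Matrix.mul_one]

private lemma key_rearrange_abs {m : ℕ} (a b : Fin m → ℝ) (M : Fin m → Fin m → ℝ)
    (ha : Antitone a) (ha0 : ∀ i, 0 ≤ a i) (hb : Antitone b) (hb0 : ∀ i, 0 ≤ b i)
    (hrow : ∀ i, ∑ l, |M i l| ≤ 1) (hcol : ∀ l, ∑ i, |M i l| ≤ 1) :
    ∑ i, ∑ l, a i * b l * M i l ≤ ∑ i, a i * b i := by
  have h := key_rearrange a b (fun i l => |M i l|) ha ha0 hb hb0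
    (fun i l => abs_nonneg _) hrow hcol
  refine le_trans ?_ h
  apply Finset.sum_le_sum; intro i _
  apply Finset.sum_le_sum; intro l _
  exact mul_le_mul_of_nonneg_left (le_abs_self _) (mul_nonneg (ha0 i) (hb0 l))

set_option maxHeartbeats 2000000 in
private lemma von_neumann {m n : ℕ} (hmn : m ≤ n) (X B : Matrix (Fin m) (Fin n) ℝ)
    (U : Matrix (Fin m) (Fin m) ℝ) (V : Matrix (Fin n) (Fin n) ℝ)
    (hU : Uᵀ * U = 1) (hV : Vᵀ * V = 1)
    (hSVD : B = U * (rectDiag (singularValues B) : Matrix (Fin m) (Fin n) ℝ) * Vᵀ) :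
    ∑ i, ∑ j, X i j * B i j ≤ ∑ i, singularValues X i * singularValues B i := by
  classical
  obtain ⟨P, Y, hPtP, hPPt, hXPY, hYY⟩ := exists_P_Y X
  set a := singularValues X with haa
  set b := singularValues B with hbb
  set ι : Fin m → Fin n := Fin.castLE hmn with hι
  have hιinj : Function.Injective ι := Fin.castLE_injective hmn
  set Z := Y * V with hZ
  have hV' : V * Vᵀ = 1 := mul_eq_one_comm.mp hV
  have hU' : U * Uᵀ = 1 := mul_eq_one_comm.mp hU
  have hZZ : Z * Zᵀ = Matrix.diagonal (fun k => a k ^ 2) := by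
    rw [hZ, Matrix.transpose_mul]
    calc Y * V * (Vᵀ * Yᵀ) = Y * (V * Vᵀ) * Yᵀ := by simp only [Matrix.mul_assoc]
      _ = Y * Yᵀ := by rw [hV', Matrix.mul_one]
      _ = _ := hYY
  set W := Pᵀ * U with hW
  have hWWt : W * Wᵀ = 1 := by
    rw [hW, Matrix.transpose_mul, Matrix.transpose_transpose]
    calc Pᵀ * U * (Uᵀ * P) = Pᵀ * (U * Uᵀ) * P := by simp only [Matrix.mul_assoc]
      _ = Pᵀ * P := by rw [hU', Matrix.mul_one]
      _ = 1 := hPtP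
  have hWtW : Wᵀ * W = 1 := mul_eq_one_comm.mp hWWt
  have hZrow : ∀ k l, ∑ j, Z k j * Z l j = if k = l then a k ^ 2 else 0 := by
    intro k l
    have h := congrFun (congrFun hZZ k) l
    rw [Matrix.mul_apply] at h
    simp only [Matrix.transpose_apply, Matrix.diagonal_apply] at h
    exact h
  have hWrow : ∀ k, ∑ l, W k l ^ 2 = 1 := by
    intro k
    have h := congrFun (congrFun hWWt k) k
    rw [Matrix.mul_apply] at h
    simpa [Matrix.transpose_apply, pow_two] using h
  have hWcol : ∀ l, ∑ k, W k l ^ 2 = 1 := by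
    intro l
    have h := congrFun (congrFun hWtW l) l
    rw [Matrix.mul_apply] at h
    simpa [Matrix.transpose_apply, pow_two] using h
  have ha0 : ∀ k, 0 ≤ a k := fun k => Real.sqrt_nonneg _
  have hb0 : ∀ k, 0 ≤ b k := fun k => Real.sqrt_nonneg _
  set R : Fin m → Fin n → ℝ := fun k j => if a k = 0 then 0 else Z k j / a k with hR
  have hZzero : ∀ k, a k = 0 → ∀ j, Z k j = 0 := by
    intro k hk j
    have h := hZrow k k
    rw [if_pos rfl, hk] at h
    have h0 : ∑ j, Z k j ^ 2 = 0 := by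
      simpa [pow_two] using h
    have hj := (Finset.sum_eq_zero_iff_of_nonneg
      (fun j _ => sq_nonneg (Z k j))).mp h0 j (Finset.mem_univ j)
    exact pow_eq_zero_iff (two_ne_zero) |>.mp hj
  have hRorth : ∀ k k', ∑ j, R k j * R k' j
      = if k = k' then (if a k = 0 then 0 else 1) else 0 := by
    intro k k'
    by_cases hk : a k = 0
    · simp only [hR, if_pos hk, zero_mul, Finset.sum_const_zero]
      by_cases h : k = k' <;> simp [h, hk]
    · by_cases hk' : a k' = 0
      · have : ∀ j, R k j * R k' j = 0 := by
          intro j; simp [hR, if_pos hk', mul_zero]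
        rw [Finset.sum_congr rfl fun j _ => this j, Finset.sum_const_zero]
        have hne : k ≠ k' := fun hc => hk (hc ▸ hk')
        simp [hne]
      · have : ∀ j, R k j * R k' j = (Z k j * Z k' j) / (a k * a k') := by
          intro j; simp only [hR, if_neg hk, if_neg hk']; field_simp
        rw [Finset.sum_congr rfl fun j _ => this j, ← Finset.sum_div, hZrow k k']
        by_cases h : k = k'
        · subst h
          rw [if_pos rfl, if_pos rfl, if_neg hk]
          field_simp
        · simp [h]
  have hRzero : ∀ k, a k = 0 → ∀ j, R k j = 0 := by
    intro k hk j; simp [hR, hk]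
  set M : Fin m → Fin m → ℝ := fun k l => W k l * R k (ι l) with hM
  -- the inner product identity
  have hid : ∑ i, ∑ j, X i j * B i j = ∑ k, ∑ l, a k * b l * M k l := by
    have hBe : ∀ i j, B i j = ∑ l, U i l * b l * V j (ι l) := by
      intro i j
      rw [hSVD, Matrix.mul_apply]
      calc ∑ c, (U * (rectDiag b : Matrix (Fin m) (Fin n) ℝ)) i c * Vᵀ c j
          = ∑ c, ∑ l, U i l * (rectDiag b : Matrix (Fin m) (Fin n) ℝ) l c * V j c := by
            apply Finset.sum_congr rfl; intro c _
            rw [Matrix.mul_apply, Matrix.transpose_apply, Finset.sum_mul]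
        _ = ∑ l, ∑ c, U i l * (rectDiag b : Matrix (Fin m) (Fin n) ℝ) l c * V j c :=
            Finset.sum_comm
        _ = ∑ l, U i l * b l * V j (ι l) := by
            apply Finset.sum_congr rfl; intro l _
            have hterm : ∀ c : Fin n,
                U i l * (rectDiag b : Matrix (Fin m) (Fin n) ℝ) l c * V j c
                = if c = ι l then U i l * b l * V j c else 0 := by
              intro c
              simp only [rectDiag, Matrix.of_apply]
              by_cases h : (l : ℕ) = (c : ℕ)
              · rw [if_pos h, if_pos (Fin.ext h.symm : c = ι l)]
              · rw [if_neg h, if_neg (fun hc => h (by rw [hc]; rfl)), mul_zero, zero_mul]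
            rw [Finset.sum_congr rfl fun c _ => hterm c,
              Finset.sum_ite_eq' Finset.univ (ι l)]
            simp
    have hWZ : Wᵀ * Z = Uᵀ * X * V := by
      rw [hW, hZ, hXPY, Matrix.transpose_mul, Matrix.transpose_transpose]
      simp only [Matrix.mul_assoc]
    have hsum : ∀ l, ∑ k, W k l * Z k (ι l) = ∑ i, ∑ j, X i j * U i l * V j (ι l) := by
      intro l
      have h1 : (Wᵀ * Z) l (ι l) = ∑ k, W k l * Z k (ι l) := by
        rw [Matrix.mul_apply]
        apply Finset.sum_congr rfl; intro k _; rw [Matrix.transpose_apply]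
      have h2 : (Uᵀ * X * V) l (ι l) = ∑ i, ∑ j, X i j * U i l * V j (ι l) := by
        rw [Matrix.mul_apply]
        calc ∑ j, (Uᵀ * X) l j * V j (ι l)
            = ∑ j, ∑ i, X i j * U i l * V j (ι l) := by
              apply Finset.sum_congr rfl; intro j _
              rw [Matrix.mul_apply, Finset.sum_mul]
              apply Finset.sum_congr rfl; intro i _
              rw [Matrix.transpose_apply]; ring
          _ = ∑ i, ∑ j, X i j * U i l * V j (ι l) := Finset.sum_comm
      rw [← h1, hWZ, h2]
    calc ∑ i, ∑ j, X i j * B i j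
        = ∑ i, ∑ j, ∑ l, X i j * (U i l * b l * V j (ι l)) := by
          apply Finset.sum_congr rfl; intro i _
          apply Finset.sum_congr rfl; intro j _
          rw [hBe i j, Finset.mul_sum]
      _ = ∑ i, ∑ l, ∑ j, X i j * (U i l * b l * V j (ι l)) := by
          apply Finset.sum_congr rfl; intro i _
          exact Finset.sum_comm
      _ = ∑ l, ∑ i, ∑ j, X i j * (U i l * b l * V j (ι l)) := Finset.sum_comm
      _ = ∑ l, b l * ∑ i, ∑ j, X i j * U i l * V j (ι l) := by
          apply Finset.sum_congr rfl; intro l _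
          rw [Finset.mul_sum]; apply Finset.sum_congr rfl; intro i _
          rw [Finset.mul_sum]; apply Finset.sum_congr rfl; intro j _
          ring
      _ = ∑ l, b l * ∑ k, W k l * Z k (ι l) := by
          apply Finset.sum_congr rfl; intro l _; rw [hsum l]
      _ = ∑ l, ∑ k, a k * b l * M k l := by
          apply Finset.sum_congr rfl; intro l _
          rw [Finset.mul_sum]
          apply Finset.sum_congr rfl; intro k _
          simp only [hM, hR]
          by_cases hk : a k = 0
          · rw [if_pos hk, hZzero k hk (ι l)]; ring
          · rw [if_neg hk]; field_simp
      _ = ∑ k, ∑ l, a k * b l * M k l := Finset.sum_comm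
  -- row bounds
  have hrow : ∀ k, ∑ l, |M k l| ≤ 1 := by
    intro k
    have habs : ∀ l, |M k l| = |W k l| * |R k (ι l)| := by
      intro l; simp only [hM]; rw [abs_mul]
    have hRsum : ∑ l, R k (ι l) ^ 2 ≤ 1 := by
      by_cases hk : a k = 0
      · simp [hRzero k hk]
      · have h1 : ∀ l : Fin m, R k (ι l) ^ 2 = Z k (ι l) ^ 2 / a k ^ 2 := by
          intro l; simp only [hR, if_neg hk]; rw [div_pow]
        have h2 : ∑ l : Fin m, Z k (ι l) ^ 2 ≤ ∑ j : Fin n, Z k j ^ 2 := by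
          have himg : ∑ l : Fin m, Z k (ι l) ^ 2
              = ∑ j ∈ Finset.image ι Finset.univ, Z k j ^ 2 := by
            rw [Finset.sum_image (fun x _ y _ h => hιinj h)]
          rw [himg]
          exact Finset.sum_le_sum_of_subset_of_nonneg (Finset.subset_univ _)
            (fun j _ _ => sq_nonneg _)
        have h3 : ∑ j, Z k j ^ 2 = a k ^ 2 := by
          have h := hZrow k k; rw [if_pos rfl] at h
          rw [← h]; apply Finset.sum_congr rfl; intro j _; ring
        rw [Finset.sum_congr rfl fun l (_ : l ∈ Finset.univ) => h1 l, ← Finset.sum_div,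
          div_le_one (by positivity)]
        exact h3 ▸ h2
    have hcs := Finset.sum_mul_sq_le_sq_mul_sq Finset.univ
      (fun l => |W k l|) (fun l => |R k (ι l)|)
    have e1 : ∑ l, |W k l| ^ 2 = 1 := by
      rw [← hWrow k]; apply Finset.sum_congr rfl; intro l _; rw [sq_abs]
    have e2 : ∑ l, |R k (ι l)| ^ 2 ≤ 1 := by
      calc ∑ l, |R k (ι l)| ^ 2 = ∑ l, R k (ι l) ^ 2 := by
            apply Finset.sum_congr rfl; intro l _; rw [sq_abs]
        _ ≤ 1 := hRsum
    have hnn : (0:ℝ) ≤ ∑ l, |W k l| * |R k (ι l)| :=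
      Finset.sum_nonneg fun l _ => mul_nonneg (abs_nonneg _) (abs_nonneg _)
    have hfin : ∑ l, |M k l| = ∑ l, |W k l| * |R k (ι l)| :=
      Finset.sum_congr rfl fun l _ => habs l
    rw [hfin]
    nlinarith [hcs, e1, e2, hnn, sq_nonneg ((∑ l, |W k l| * |R k (ι l)|) - 1)]
  -- column bounds
  have hcolM : ∀ l, ∑ k, |M k l| ≤ 1 := by
    intro l
    set c := ι l with hc
    have hproj : ∑ k, R k c ^ 2 ≤ 1 := by
      set q : Fin n → ℝ := fun c' => ∑ k, R k c * R k c' with hq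
      have hqc : q c = ∑ k, R k c ^ 2 := by
        simp only [hq]; apply Finset.sum_congr rfl; intro k _; ring
      have hkey : ∑ c', (q c') ^ 2 = q c := by
        calc ∑ c', (q c') ^ 2
            = ∑ c', ∑ k, ∑ k', (R k c * R k c') * (R k' c * R k' c') := by
              apply Finset.sum_congr rfl; intro c' _
              simp only [hq]; rw [pow_two, Finset.sum_mul_sum]
          _ = ∑ k, ∑ k', (R k c * R k' c) * ∑ c', R k c' * R k' c' := by
              rw [Finset.sum_comm]
              apply Finset.sum_congr rfl; intro k _
              rw [Finset.sum_comm]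
              apply Finset.sum_congr rfl; intro k' _
              rw [Finset.mul_sum]
              apply Finset.sum_congr rfl; intro c' _; ring
          _ = ∑ k, ∑ k', (R k c * R k' c)
                * (if k = k' then (if a k = 0 then 0 else 1) else 0) := by
              apply Finset.sum_congr rfl; intro k _
              apply Finset.sum_congr rfl; intro k' _
              rw [hRorth k k']
          _ = ∑ k, R k c ^ 2 * (if a k = 0 then 0 else 1) := by
              apply Finset.sum_congr rfl; intro k _
              rw [Finset.sum_eq_single k]
              · rw [if_pos rfl]; ring
              · intro k' _ hk'; rw [if_neg (fun h => hk' h.symm), mul_zero]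
              · intro h; exact absurd (Finset.mem_univ k) h
          _ = q c := by
              rw [hqc]
              apply Finset.sum_congr rfl; intro k _
              by_cases hk : a k = 0
              · rw [if_pos hk, hRzero k hk c]; ring
              · rw [if_neg hk, mul_one]
      have hone : (q c) ^ 2 ≤ ∑ c', (q c') ^ 2 :=
        Finset.single_le_sum (f := fun c' => (q c') ^ 2)
          (fun _ _ => sq_nonneg _) (Finset.mem_univ c)
      have hqnn : 0 ≤ q c := by rw [hqc]; positivity
      have hqle : q c ≤ 1 := by nlinarith [hone, hkey, sq_nonneg (q c - 1)]
      rw [← hqc]; exact hqle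
    have hcs := Finset.sum_mul_sq_le_sq_mul_sq Finset.univ
      (fun k => |W k l|) (fun k => |R k c|)
    have e1 : ∑ k, |W k l| ^ 2 = 1 := by
      rw [← hWcol l]; apply Finset.sum_congr rfl; intro k _; rw [sq_abs]
    have e2 : ∑ k, |R k c| ^ 2 ≤ 1 := by
      calc ∑ k, |R k c| ^ 2 = ∑ k, R k c ^ 2 := by
            apply Finset.sum_congr rfl; intro k _; rw [sq_abs]
        _ ≤ 1 := hproj
    have hnn : (0:ℝ) ≤ ∑ k, |W k l| * |R k c| :=
      Finset.sum_nonneg fun k _ => mul_nonneg (abs_nonneg _) (abs_nonneg _)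
    have hfin : ∑ k, |M k l| = ∑ k, |W k l| * |R k c| := by
      apply Finset.sum_congr rfl; intro k _
      simp only [hM, hc]; rw [abs_mul]
    rw [hfin]
    nlinarith [hcs, e1, e2, hnn, sq_nonneg ((∑ k, |W k l| * |R k c|) - 1)]
  rw [hid]
  exact key_rearrange_abs a b M (sv_antitone X) ha0 (sv_antitone B) hb0 hrow hcolM

private lemma charpoly_conj {m : ℕ} (W C0 : Matrix (Fin m) (Fin m) ℝ)
    (hW : Wᵀ * W = 1) : (W * C0 * Wᵀ).charpoly = C0.charpoly := by
  classical
  have hW' : W * Wᵀ = 1 := mul_eq_one_comm.mp hW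
  set f : ℝ →+* Polynomial ℝ := Polynomial.C with hf
  have hmul : ∀ (A B : Matrix (Fin m) (Fin m) ℝ), (A * B).map f = A.map f * B.map f :=
    fun A B => Matrix.map_mul
  have hone : (1 : Matrix (Fin m) (Fin m) ℝ).map f = 1 :=
    Matrix.map_one f (map_zero f) (map_one f)
  have h1 : W.map f * (Wᵀ).map f = 1 := by rw [← hmul, hW', hone]
  have h1' : (Wᵀ).map f * W.map f = 1 := by rw [← hmul, hW, hone]
  have hcm : Matrix.charmatrix (W * C0 * Wᵀ)
      = W.map f * Matrix.charmatrix C0 * (Wᵀ).map f := by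
    unfold Matrix.charmatrix
    have hsc : ∀ A : Matrix (Fin m) (Fin m) (Polynomial ℝ),
        Matrix.scalar (Fin m) (Polynomial.X : Polynomial ℝ) * A
          = A * Matrix.scalar (Fin m) (Polynomial.X : Polynomial ℝ) :=
      fun A => (Matrix.scalar_commute _ (fun r' => Commute.all _ r') A).eq
    rw [Matrix.mul_sub, Matrix.sub_mul]
    congr 1
    · rw [← hsc, Matrix.mul_assoc, h1, Matrix.mul_one]
    · simp only [RingHom.mapMatrix_apply]
      rw [hmul, hmul]
  rw [Matrix.charpoly, hcm, Matrix.det_mul, Matrix.det_mul, Matrix.charpoly]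
  have : (W.map f).det * ((Wᵀ).map f).det = 1 := by
    rw [mul_comm, ← Matrix.det_mul, h1']
    exact Matrix.det_one
  calc (W.map f).det * (Matrix.charmatrix C0).det * ((Wᵀ).map f).det
      = (Matrix.charmatrix C0).det * ((W.map f).det * ((Wᵀ).map f).det) := by ring
    _ = (Matrix.charmatrix C0).det := by rw [this, mul_one]

private lemma charpoly_diag {m : ℕ} (d : Fin m → ℝ) :
    (Matrix.diagonal d).charpoly
      = ∏ i, ((Polynomial.X : Polynomial ℝ) - Polynomial.C (d i)) := by
  classical
  have h : Matrix.charmatrix (Matrix.diagonal d)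
      = Matrix.diagonal (fun i => (Polynomial.X : Polynomial ℝ) - Polynomial.C (d i)) := by
    funext i j
    by_cases hij : i = j
    · subst hij; simp
    · rw [Matrix.charmatrix_apply_ne _ _ _ hij, Matrix.diagonal_apply_ne _ hij,
        Matrix.diagonal_apply_ne _ hij]
      simp
  rw [Matrix.charpoly, h, Matrix.det_diagonal]

private lemma herm_decomp {m : ℕ} (A : Matrix (Fin m) (Fin m) ℝ) (hA : A.IsHermitian) :
    ∃ P0 : Matrix (Fin m) (Fin m) ℝ,
      P0ᵀ * P0 = 1 ∧ A = P0 * Matrix.diagonal hA.eigenvalues * P0ᵀ := by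
  refine ⟨(hA.eigenvectorUnitary : Matrix (Fin m) (Fin m) ℝ), ?_, ?_⟩
  · have h := Matrix.mem_unitaryGroup_iff'.mp hA.eigenvectorUnitary.2
    rw [Matrix.star_eq_conjTranspose, Matrix.conjTranspose_eq_transpose_of_trivial] at h
    exact h
  · have h := hA.spectral_theorem
    rw [← Matrix.conjTranspose_eq_transpose_of_trivial, ← Matrix.star_eq_conjTranspose]
    rw [Unitary.conjStarAlgAut_apply] at h
    exact h

private lemma eig_multiset {m : ℕ} (A : Matrix (Fin m) (Fin m) ℝ) (hA : A.IsHermitian)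
    (d : Fin m → ℝ) (W : Matrix (Fin m) (Fin m) ℝ) (hW : Wᵀ * W = 1)
    (hAd : A = W * Matrix.diagonal d * Wᵀ) :
    Multiset.map hA.eigenvalues Finset.univ.val = Multiset.map d Finset.univ.val := by
  classical
  obtain ⟨P0, hP0, hsp⟩ := herm_decomp A hA
  have h1 : A.charpoly
      = ∏ i, ((Polynomial.X : Polynomial ℝ) - Polynomial.C (hA.eigenvalues i)) := by
    conv_lhs => rw [hsp]
    rw [charpoly_conj _ _ hP0, charpoly_diag]
  have h2 : A.charpoly
      = ∏ i, ((Polynomial.X : Polynomial ℝ) - Polynomial.C (d i)) := by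
    rw [hAd, charpoly_conj _ _ hW, charpoly_diag]
  have key : ∀ e : Fin m → ℝ,
      (∏ i, ((Polynomial.X : Polynomial ℝ) - Polynomial.C (e i))).roots
        = Multiset.map e Finset.univ.val := by
    intro e
    have : ∏ i, ((Polynomial.X : Polynomial ℝ) - Polynomial.C (e i))
        = (Multiset.map (fun a => (Polynomial.X : Polynomial ℝ) - Polynomial.C a)
            (Multiset.map e Finset.univ.val)).prod := by
      rw [Multiset.map_map]
      rfl
    rw [this, Polynomial.roots_multiset_prod_X_sub_C]
  have := congrArg Polynomial.roots (h1.symm.trans h2)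
  rw [key, key] at this
  exact this

private lemma rectDiag_mul_transpose {m n : ℕ} (hmn : m ≤ n) (d : Fin m → ℝ) :
    (rectDiag d : Matrix (Fin m) (Fin n) ℝ) * (rectDiag d : Matrix (Fin m) (Fin n) ℝ)ᵀ
      = Matrix.diagonal (fun i => d i ^ 2) := by
  classical
  funext i j
  rw [Matrix.mul_apply]
  have hterm : ∀ c : Fin n, (rectDiag d : Matrix (Fin m) (Fin n) ℝ) i c
      * (rectDiag d : Matrix (Fin m) (Fin n) ℝ)ᵀ c j
      = if c = Fin.castLE hmn i then (if (j:ℕ) = (i:ℕ) then d i * d j else 0) else 0 := by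
    intro c
    rw [Matrix.transpose_apply]
    simp only [rectDiag, Matrix.of_apply]
    by_cases h1 : (i:ℕ) = (c:ℕ)
    · rw [if_pos h1, if_pos (Fin.ext h1.symm : c = Fin.castLE hmn i)]
      by_cases h2 : (j:ℕ) = (c:ℕ)
      · rw [if_pos h2, if_pos (h2.trans h1.symm)]
      · rw [if_neg h2, if_neg (fun hc : (j:ℕ) = (i:ℕ) => h2 (hc.trans h1)), mul_zero]
    · rw [if_neg h1, if_neg (fun hc : c = Fin.castLE hmn i => h1 (by rw [hc]; rfl)), zero_mul]
  rw [Finset.sum_congr rfl fun c _ => hterm c,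
    Finset.sum_ite_eq' Finset.univ (Fin.castLE hmn i)]
  simp only [Finset.mem_univ, if_true]
  rw [Matrix.diagonal_apply]
  by_cases h : i = j
  · subst h; rw [if_pos rfl, if_pos rfl]; ring
  · rw [if_neg (fun hc : (j:ℕ) = (i:ℕ) => h (Fin.ext hc.symm)), if_neg h]

private lemma sv_of_svd {m n : ℕ} (hmn : m ≤ n) (ϱ : Fin m → ℝ)
    (hϱ_anti : Antitone ϱ) (hϱ0 : ∀ i, 0 ≤ ϱ i)
    (U : Matrix (Fin m) (Fin m) ℝ) (V : Matrix (Fin n) (Fin n) ℝ)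
    (hU : Uᵀ * U = 1) (hV : Vᵀ * V = 1) :
    singularValues (U * (rectDiag ϱ : Matrix (Fin m) (Fin n) ℝ) * Vᵀ) = ϱ := by
  classical
  set Xs : Matrix (Fin m) (Fin n) ℝ := U * (rectDiag ϱ : Matrix (Fin m) (Fin n) ℝ) * Vᵀ with hXs
  have hV' : V * Vᵀ = 1 := mul_eq_one_comm.mp hV
  have hXXT : Xs * Xsᵀ = U * Matrix.diagonal (fun i => ϱ i ^ 2) * Uᵀ := by
    rw [hXs, Matrix.transpose_mul, Matrix.transpose_mul, Matrix.transpose_transpose]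
    calc U * (rectDiag ϱ : Matrix (Fin m) (Fin n) ℝ) * Vᵀ * (V * ((rectDiag ϱ : Matrix (Fin m) (Fin n) ℝ)ᵀ * Uᵀ))
        = U * (rectDiag ϱ : Matrix (Fin m) (Fin n) ℝ) * (Vᵀ * V) * ((rectDiag ϱ : Matrix (Fin m) (Fin n) ℝ)ᵀ * Uᵀ) := by
          simp only [Matrix.mul_assoc]
      _ = U * ((rectDiag ϱ : Matrix (Fin m) (Fin n) ℝ)
            * (rectDiag ϱ : Matrix (Fin m) (Fin n) ℝ)ᵀ) * Uᵀ := by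
          rw [hV, Matrix.mul_one]; simp only [Matrix.mul_assoc]
      _ = U * Matrix.diagonal (fun i => ϱ i ^ 2) * Uᵀ := by
          rw [rectDiag_mul_transpose hmn]
  have hH := Matrix.isHermitian_mul_conjTranspose_self Xs
  have hconj : Xs * Xsᴴ = U * Matrix.diagonal (fun i => ϱ i ^ 2) * Uᵀ := by
    rw [Matrix.conjTranspose_eq_transpose_of_trivial]; exact hXXT
  have hmult := eig_multiset (Xs * Xsᴴ) hH (fun i => ϱ i ^ 2) U hU hconj
  have h2 : Multiset.map (svUnsorted Xs) Finset.univ.val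
      = Multiset.map ϱ Finset.univ.val := by
    calc Multiset.map (svUnsorted Xs) Finset.univ.val
        = Multiset.map Real.sqrt (Multiset.map hH.eigenvalues Finset.univ.val) := by
          rw [Multiset.map_map]; rfl
      _ = Multiset.map Real.sqrt (Multiset.map (fun i => ϱ i ^ 2) Finset.univ.val) := by
          rw [hmult]
      _ = Multiset.map ϱ Finset.univ.val := by
          rw [Multiset.map_map]
          exact Multiset.map_congr rfl fun i _ => Real.sqrt_sq (hϱ0 i)
  exact antitone_eq_of_multiset_eq (sv_antitone Xs) hϱ_anti ((sv_multiset Xs).trans h2)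

private lemma frobSq_sub_expand {m n : ℕ} (X B : Matrix (Fin m) (Fin n) ℝ) :
    frobSq (X - B) = frobSq X - 2 * (∑ i, ∑ j, X i j * B i j) + frobSq B := by
  unfold frobSq
  rw [Finset.mul_sum, ← Finset.sum_sub_distrib, ← Finset.sum_add_distrib]
  apply Finset.sum_congr rfl; intro i _
  rw [Finset.mul_sum, ← Finset.sum_sub_distrib, ← Finset.sum_add_distrib]
  apply Finset.sum_congr rfl; intro j _
  rw [Matrix.sub_apply]; ring

/-- Generalized Singular Value Thresholding: performing a nonincreasing selection
of the proximal operator of `g` on the singular values of `B` yields a global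
minimizer of `X ↦ ∑ᵢ g(σᵢ(X)) + ½‖X - B‖_F²`. -/
theorem gsvt_optimal {m n : ℕ} (hmn : m ≤ n)
    (g : ℝ → ℝ) (hg_nonneg : ∀ x ∈ Ici (0:ℝ), 0 ≤ g x) (hg0 : g 0 = 0)
    (B : Matrix (Fin m) (Fin n) ℝ)
    (U : Matrix (Fin m) (Fin m) ℝ) (V : Matrix (Fin n) (Fin n) ℝ)
    (hU : Uᵀ * U = 1) (hV : Vᵀ * V = 1)
    (hSVD : B = U * rectDiag (singularValues B) * Vᵀ)
    (ϱ : Fin m → ℝ) (hϱ_anti : Antitone ϱ) (hϱ_nonneg : ∀ i, 0 ≤ ϱ i)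
    (hϱ_prox : ∀ i, IsMinOn
      (fun x => g x + (1/2) * (x - singularValues B i)^2) (Ici 0) (ϱ i)) :
    IsMinOn (fun X : Matrix (Fin m) (Fin n) ℝ =>
        (∑ i, g (singularValues X i)) + (1/2) * frobSq (X - B))
      Set.univ (U * rectDiag ϱ * Vᵀ) := by
  rw [isMinOn_iff]
  intro X _
  set b := singularValues B with hb
  set σ := singularValues X with hσ
  set Xs : Matrix (Fin m) (Fin n) ℝ := U * rectDiag ϱ * Vᵀ with hXs
  have hsvXs : singularValues Xs = ϱ := sv_of_svd hmn ϱ hϱ_anti hϱ_nonneg U V hU hV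
  -- value at Xs
  have hXsB : Xs - B = U * (rectDiag (ϱ - b) : Matrix (Fin m) (Fin n) ℝ) * Vᵀ := by
    rw [hXs]
    conv_lhs => rw [hSVD]
    show U * (rectDiag ϱ : Matrix (Fin m) (Fin n) ℝ) * Vᵀ - U * (rectDiag b : Matrix (Fin m) (Fin n) ℝ) * Vᵀ = _
    rw [← rectDiag_sub, Matrix.mul_sub, Matrix.sub_mul]
  have hfXs : frobSq (Xs - B) = ∑ i, (ϱ i - b i)^2 := by
    rw [hXsB, frobSq_unitary U V hU hV, frobSq_rectDiag hmn]
    apply Finset.sum_congr rfl; intro i _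
    rfl
  -- inequalities for X
  have hvn : ∑ i, ∑ j, X i j * B i j ≤ ∑ i, σ i * b i :=
    von_neumann hmn X B U V hU hV hSVD
  have hfX : frobSq (X - B) = frobSq X - 2 * (∑ i, ∑ j, X i j * B i j) + frobSq B :=
    frobSq_sub_expand X B
  have hsX : frobSq X = ∑ i, σ i ^ 2 := frobSq_eq_sum_sv X
  have hsB : frobSq B = ∑ i, b i ^ 2 := frobSq_eq_sum_sv B
  have hprox : ∑ i, (g (ϱ i) + (1/2) * (ϱ i - b i)^2)
      ≤ ∑ i, (g (σ i) + (1/2) * (σ i - b i)^2) := by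
    apply Finset.sum_le_sum
    intro i _
    exact isMinOn_iff.mp (hϱ_prox i) (σ i) (Set.mem_Ici.mpr (sv_nonneg X i))
  have hsplit1 : ∑ i, (g (ϱ i) + (1/2) * (ϱ i - b i)^2)
      = (∑ i, g (ϱ i)) + (1/2) * ∑ i, (ϱ i - b i)^2 := by
    rw [Finset.sum_add_distrib, Finset.mul_sum]
  have hsplit2 : ∑ i, (g (σ i) + (1/2) * (σ i - b i)^2)
      = (∑ i, g (σ i)) + (1/2) * ∑ i, (σ i - b i)^2 := by
    rw [Finset.sum_add_distrib, Finset.mul_sum]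
  have hexp : ∑ i, (σ i - b i)^2
      = (∑ i, σ i ^ 2) - 2 * (∑ i, σ i * b i) + ∑ i, b i ^ 2 := by
    rw [Finset.mul_sum, ← Finset.sum_sub_distrib, ← Finset.sum_add_distrib]
    apply Finset.sum_congr rfl; intro i _
    ring
  calc (∑ i, g (singularValues Xs i)) + (1/2) * frobSq (Xs - B)
      = (∑ i, g (ϱ i)) + (1/2) * ∑ i, (ϱ i - b i)^2 := by rw [hsvXs, hfXs]
    _ = ∑ i, (g (ϱ i) + (1/2) * (ϱ i - b i)^2) := hsplit1.symm
    _ ≤ ∑ i, (g (σ i) + (1/2) * (σ i - b i)^2) := hprox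
    _ = (∑ i, g (σ i)) + (1/2) * ∑ i, (σ i - b i)^2 := hsplit2
    _ ≤ (∑ i, g (σ i)) + (1/2) * frobSq (X - B) := by
        rw [hfX, hsX, hsB, hexp]
        linarith [hvn]
end

section
/- Let g : [0,∞) → [0,∞) satisfy g(0) = 0, g concave, nondecreasing, differentiable with g'(0) < ∞, and suppose g'(0) - x ≤ g'(x) for all x ∈ (0, g'(0)). Then for every b ≤ g'(0), 0 is a global minimizer of f_b(x) = g(x) + (1/2)(x - b)² on [0, ∞) (hard thresholding below the threshold g'(0)). -/
open Set

/-- Hard thresholding: if `g'(0) - x ≤ g'(x)` on `(0, g'(0))`, then for every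
`b ≤ g'(0)`, `0` globally minimizes `f_b(x) = g(x) + (x - b)²/2` on `[0,∞)`. -/
theorem zero_is_min_below_threshold (g g' : ℝ → ℝ)
    (hg_nonneg : ∀ x ∈ Ici (0:ℝ), 0 ≤ g x) (hg0 : g 0 = 0)
    (hconc : ConcaveOn ℝ (Ici 0) g) (hmono : MonotoneOn g (Ici 0))
    (hderiv : ∀ x ∈ Ici (0:ℝ), HasDerivWithinAt g (g' x) (Ici 0) x)
    (hline : ∀ x ∈ Ioo (0:ℝ) (g' 0), g' 0 - x ≤ g' x)
    (b : ℝ) (hb0 : 0 ≤ b) (hb : b ≤ g' 0) :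
    IsMinOn (fun x => g x + (1/2) * (x - b)^2) (Ici 0) 0 := by
  set f : ℝ → ℝ := fun x => g x + (1/2) * (x - b)^2 with hf
  -- g' is nonnegative at interior points
  have hg'nonneg : ∀ x : ℝ, 0 < x → 0 ≤ g' x := by
    intro x hx
    have hd : HasDerivAt g (g' x) x :=
      (hderiv x hx.le).hasDerivAt (Ici_mem_nhds hx)
    have ht : Filter.Tendsto (slope g x) (nhdsWithin x (Ioi x)) (nhds (g' x)) :=
      (hasDerivAt_iff_tendsto_slope.mp hd).mono_left
        (nhdsWithin_mono x (fun y hy => ne_of_gt hy))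
    refine ge_of_tendsto ht ?_
    filter_upwards [self_mem_nhdsWithin] with y hy
    have hy' : x < y := hy
    have : g x ≤ g y := hmono hx.le (le_trans hx.le hy'.le) hy'.le
    have := div_nonneg (sub_nonneg.mpr this) (sub_nonneg.mpr hy'.le)
    simpa [slope_def_field, div_eq_mul_inv] using this
  -- f has derivative g' x + (x - b) at interior points
  have hfd : ∀ x : ℝ, 0 < x → HasDerivAt f (g' x + (x - b)) x := by
    intro x hx
    have hd : HasDerivAt g (g' x) x :=
      (hderiv x hx.le).hasDerivAt (Ici_mem_nhds hx)
    have h2 : HasDerivAt (fun x : ℝ => (1/2) * (x - b)^2) ((x - b)) x := by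
      have : HasDerivAt (fun x : ℝ => (x - b)^2) (2 * (x - b)^1 * 1) x :=
        ((hasDerivAt_id x).sub_const b).pow 2
      have h' := this.const_mul (1/2 : ℝ)
      exact h'.congr_deriv (by ring)
    exact hd.add h2
  -- the derivative is nonnegative at interior points
  have hnn : ∀ x : ℝ, 0 < x → 0 ≤ g' x + (x - b) := by
    intro x hx
    rcases lt_or_ge x (g' 0) with h | h
    · have := hline x ⟨hx, h⟩
      linarith
    · have := hg'nonneg x hx
      linarith
  -- f is monotone on [0,∞)
  have hcont : ContinuousOn f (Ici 0) := by
    intro x hx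
    exact ((hderiv x hx).continuousWithinAt.add
      ((continuous_const.mul ((continuous_id.sub continuous_const).pow 2)).continuousWithinAt))
  have hmonoF : MonotoneOn f (Ici 0) := by
    apply monotoneOn_of_deriv_nonneg (convex_Ici 0) hcont
    · intro x hx
      rw [interior_Ici] at hx
      exact (hfd x hx).differentiableAt.differentiableWithinAt
    · intro x hx
      rw [interior_Ici] at hx
      rw [(hfd x hx).deriv]
      exact hnn x hx
  intro x hx
  simp only [Set.mem_setOf_eq]
  exact hmonoF (self_mem_Ici) hx hx
end
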